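/- arXiv:2502.19203 — 7 statements merged into one kernel-verified Lean document; each statement's English description precedes it below -/
import Mathlib

section
/- Let N ≥ 1 and let b, β, c, γ, Γ : ℝ^N → ℝ be continuous maps that are locally Lipschitz continuous on ℝ^N and satisfy Assumptions A. Then for every initial value z₀ ∈ ℝ^N there exists a unique differentiable function z : [0,∞) → ℝ^N with z(0) = z₀ that solves the moment ODE system on all of [0,∞) (i.e., the unique maximal solution of the moment ODE system is global). -/
open MeasureTheory

/-- The norm `‖x‖_N := (∑_{i=1}^N |x_i|^{2/i})^{1/2}` (components indexed by `Fin N`,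
so `x i` is the `(i+1)`-th coordinate). -/
noncomputable def normN (N : ℕ) (x : Fin N → ℝ) : ℝ :=
  Real.sqrt (∑ i : Fin N, |x i| ^ ((2 : ℝ) / ((i : ℕ) + 1)))

/-- Extended components: `extComp N x j = x_j` for `1 ≤ j ≤ N`, with the conventions
`x_0 = 1` and `x_j = 0` for `j < 0`. -/
def extComp (N : ℕ) (x : Fin N → ℝ) (j : ℤ) : ℝ :=
  if h : 0 < j ∧ j ≤ (N : ℤ) then x ⟨(j - 1).toNat, by omega⟩
  else if j = 0 then 1 else 0

/-- Right-hand side of the moment ODE system for the `(k+1)`-th component (`k : Fin N`). -/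
noncomputable def momentRHS (N : ℕ) (b β c γ Γ : (Fin N → ℝ) → ℝ)
    (x : Fin N → ℝ) (k : Fin N) : ℝ :=
  (((k : ℕ) + 1 : ℝ) * β x + (((k : ℕ) + 1 : ℝ) * (k : ℕ) / 2) * Γ x) * x k
    + (((k : ℕ) + 1 : ℝ) * b x + (((k : ℕ) + 1 : ℝ) * (k : ℕ) / 2) * γ x)
        * extComp N x ((k : ℕ) : ℤ)
    + (((k : ℕ) + 1 : ℝ) * (k : ℕ) / 2) * c x * extComp N x (((k : ℕ) : ℤ) - 1)

/-- `z` solves the moment ODE system on the set `I`. -/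
def IsMomentSol (N : ℕ) (b β c γ Γ : (Fin N → ℝ) → ℝ) (I : Set ℝ)
    (z : ℝ → Fin N → ℝ) : Prop :=
  ∀ k : Fin N, ∀ t ∈ I,
    HasDerivWithinAt (fun s => z s k) (momentRHS N b β c γ Γ (z t) k) I t


open Set

lemma extComp_zero (N : ℕ) (x : Fin N → ℝ) : extComp N x 0 = 1 := by
  rw [extComp, dif_neg (by omega), if_pos rfl]

lemma extComp_negOne (N : ℕ) (x : Fin N → ℝ) : extComp N x (-1) = 0 := by
  rw [extComp, dif_neg (by omega), if_neg (by omega)]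

lemma extComp_succ (N : ℕ) (x : Fin N → ℝ) (j : ℕ) (h1 : j + 1 ≤ N) :
    extComp N x ((j : ℤ) + 1) = x ⟨j, by omega⟩ := by
  rw [extComp, dif_pos (by omega)]
  congr 1
  ext
  simp

lemma momentRHS_zero (N : ℕ) (hN : 0 < N) (b β c γ Γ : (Fin N → ℝ) → ℝ) (x : Fin N → ℝ) :
    momentRHS N b β c γ Γ x ⟨0, hN⟩ = β x * x ⟨0, hN⟩ + b x := by
  have h0 : ((⟨0, hN⟩ : Fin N) : ℕ) = 0 := rfl
  rw [momentRHS, h0]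
  push_cast
  rw [extComp_zero, extComp_negOne]
  ring

open Set Metric Filter Topology
open scoped NNReal ENNReal

lemma myLL.fun_mul {E : Type*} [MetricSpace E] {f g : E → ℝ}
    (hf : LocallyLipschitz f) (hg : LocallyLipschitz g) :
    LocallyLipschitz (fun x => f x * g x) := by
  intro x
  obtain ⟨Kf, t, ht, hft⟩ := hf x
  obtain ⟨Kg, u, hu, hgu⟩ := hg x
  obtain ⟨r, hr, hball⟩ := Metric.mem_nhds_iff.mp (inter_mem ht hu)
  set s : Set E := closedBall x (r / 2) with hs
  have hsub : s ⊆ t ∩ u := fun y hy => hball (mem_ball.2 (lt_of_le_of_lt (mem_closedBall.1 hy) (by linarith)))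
  have hxs : x ∈ s := mem_closedBall_self (by linarith)
  set Mf : ℝ := |f x| + Kf * (r / 2) with hMf
  set Mg : ℝ := |g x| + Kg * (r / 2) with hMg
  have hMf0 : 0 ≤ Mf := by positivity
  have hMg0 : 0 ≤ Mg := by positivity
  have hfb : ∀ y ∈ s, |f y| ≤ Mf := by
    intro y hy
    have h1 : dist (f y) (f x) ≤ Kf * dist y x :=
      hft.dist_le_mul y (hsub hy).1 x (hsub hxs).1
    have h2 : dist y x ≤ r / 2 := mem_closedBall.1 hy
    have := abs_sub_abs_le_abs_sub (f y) (f x)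
    rw [Real.dist_eq] at h1
    have h3 : (Kf : ℝ) * dist y x ≤ Kf * (r / 2) := mul_le_mul_of_nonneg_left h2 Kf.coe_nonneg
    simp only [hMf]; linarith
  have hgb : ∀ y ∈ s, |g y| ≤ Mg := by
    intro y hy
    have h1 : dist (g y) (g x) ≤ Kg * dist y x :=
      hgu.dist_le_mul y (hsub hy).2 x (hsub hxs).2
    have h2 : dist y x ≤ r / 2 := mem_closedBall.1 hy
    have := abs_sub_abs_le_abs_sub (g y) (g x)
    rw [Real.dist_eq] at h1
    have h3 : (Kg : ℝ) * dist y x ≤ Kg * (r / 2) := mul_le_mul_of_nonneg_left h2 Kg.coe_nonneg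
    simp only [hMg]; linarith
  refine ⟨(Mf * Kg + Mg * Kf).toNNReal, s, ?_, ?_⟩
  · exact Metric.closedBall_mem_nhds x (by linarith)
  · apply LipschitzOnWith.of_dist_le_mul
    intro y hy z hz
    have hcoe : ((Mf * Kg + Mg * Kf).toNNReal : ℝ) = Mf * Kg + Mg * Kf :=
      Real.coe_toNNReal _ (by positivity)
    rw [hcoe, Real.dist_eq]
    have e1 : f y * g y - f z * g z = f y * (g y - g z) + g z * (f y - f z) := by ring
    have h1 : dist (g y) (g z) ≤ Kg * dist y z := hgu.dist_le_mul y (hsub hy).2 z (hsub hz).2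
    have h2 : dist (f y) (f z) ≤ Kf * dist y z := hft.dist_le_mul y (hsub hy).1 z (hsub hz).1
    rw [Real.dist_eq] at h1 h2
    calc |f y * g y - f z * g z| ≤ |f y| * |g y - g z| + |g z| * |f y - f z| := by
          rw [e1]; exact (abs_add_le _ _).trans (by rw [abs_mul, abs_mul])
      _ ≤ Mf * (Kg * dist y z) + Mg * (Kf * dist y z) :=
          add_le_add (mul_le_mul (hfb y hy) h1 (abs_nonneg _) hMf0)
            (mul_le_mul (hgb z hz) h2 (abs_nonneg _) hMg0)
      _ = (Mf * Kg + Mg * Kf) * dist y z := by ring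

lemma myLL.pi {E ι : Type*} [MetricSpace E] [Fintype ι] {F : E → ι → ℝ}
    (h : ∀ i, LocallyLipschitz fun x => F x i) : LocallyLipschitz F := by
  intro x
  choose K t ht hK using fun i => (h i) x
  refine ⟨Finset.univ.sup K, ⋂ i, t i, Filter.iInter_mem.2 ht, ?_⟩
  intro y hy z hz
  rw [edist_pi_le_iff]
  intro i
  refine le_trans (hK i (mem_iInter.1 hy i) (mem_iInter.1 hz i)) ?_
  gcongr
  exact_mod_cast ENNReal.coe_le_coe.2 (Finset.le_sup (Finset.mem_univ i))

lemma myLL.lipschitzOnWith_of_isCompact {E F : Type*} [MetricSpace E] [MetricSpace F]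
    {f : E → F} (hf : LocallyLipschitz f) {s : Set E} (hs : IsCompact s) :
    ∃ K : ℝ≥0, LipschitzOnWith K f s := by
  by_contra h
  push_neg at h
  have h' : ∀ n : ℕ, ∃ x ∈ s, ∃ y ∈ s, (n : ℝ) * dist x y < dist (f x) (f y) := by
    intro n
    by_contra hc
    push_neg at hc
    refine h n (LipschitzOnWith.of_dist_le_mul fun x hx y hy => ?_)
    have := hc x hx y hy
    push_cast
    linarith
  choose X hX Y hY hd using h'
  obtain ⟨a, ha, φ₁, hφ₁, hXa⟩ := hs.tendsto_subseq hX
  obtain ⟨bb, hbb, φ₂, hφ₂, hYb⟩ := hs.tendsto_subseq (fun n => hY (φ₁ n))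
  set ψ : ℕ → ℕ := φ₁ ∘ φ₂ with hψ
  have hψm : StrictMono ψ := hφ₁.comp hφ₂
  have hXa' : Tendsto (fun n => X (ψ n)) atTop (𝓝 a) := hXa.comp hφ₂.tendsto_atTop
  have hYb' : Tendsto (fun n => Y (ψ n)) atTop (𝓝 bb) := hYb
  by_cases hab : a = bb
  · -- use local Lipschitz at a
    obtain ⟨K₀, t, ht, hK₀⟩ := hf a
    have hXt : ∀ᶠ n in atTop, X (ψ n) ∈ t := hXa' (ht)
    have hYt : ∀ᶠ n in atTop, Y (ψ n) ∈ t := by rw [← hab] at hYb'; exact hYb' ht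
    have hn : ∀ᶠ n : ℕ in atTop, (K₀ : ℝ) ≤ (ψ n : ℝ) := by
      have : Tendsto (fun n : ℕ => (ψ n : ℝ)) atTop atTop := by
        apply tendsto_natCast_atTop_atTop.comp hψm.tendsto_atTop
      exact this.eventually_ge_atTop _
    obtain ⟨n, h1, h2, h3⟩ := (hXt.and (hYt.and hn)).exists
    have hlip : dist (f (X (ψ n))) (f (Y (ψ n))) ≤ (ψ n : ℝ) * dist (X (ψ n)) (Y (ψ n)) :=
      (hK₀.dist_le_mul _ h1 _ h2).trans (mul_le_mul_of_nonneg_right h3 dist_nonneg)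
    exact absurd hlip (not_le.2 (hd (ψ n)))
  · -- a ≠ b : distance ratio blows up
    have hfc : Continuous f := hf.continuous
    have hdist : Tendsto (fun n => dist (X (ψ n)) (Y (ψ n))) atTop (𝓝 (dist a bb)) :=
      (hXa'.dist hYb')
    have hfd : Tendsto (fun n => dist (f (X (ψ n))) (f (Y (ψ n)))) atTop
        (𝓝 (dist (f a) (f bb))) := ((hfc.continuousAt.tendsto.comp hXa').dist
          (hfc.continuousAt.tendsto.comp hYb'))
    set d := dist a bb with hdd
    have hd0 : 0 < d := dist_pos.2 hab
    have e1 : ∀ᶠ n in atTop, d / 2 < dist (X (ψ n)) (Y (ψ n)) :=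
      hdist.eventually_const_lt (by linarith)
    have e2 : ∀ᶠ n in atTop, dist (f (X (ψ n))) (f (Y (ψ n))) < dist (f a) (f bb) + 1 :=
      hfd.eventually_lt_const (by linarith)
    have e3 : ∀ᶠ n : ℕ in atTop, (dist (f a) (f bb) + 1) / (d / 2) ≤ (ψ n : ℝ) := by
      have : Tendsto (fun n : ℕ => (ψ n : ℝ)) atTop atTop :=
        tendsto_natCast_atTop_atTop.comp hψm.tendsto_atTop
      exact this.eventually_ge_atTop _
    obtain ⟨n, h1, h2, h3⟩ := (e1.and (e2.and e3)).exists
    have := hd (ψ n)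
    have hq : (dist (f a) (f bb) + 1) ≤ (ψ n : ℝ) * (d / 2) := by
      rw [div_le_iff₀ (by linarith)] at h3
      linarith
    nlinarith [(show (0:ℝ) ≤ (ψ n : ℝ) from Nat.cast_nonneg _), this, hq, h1, h2]

/-- First-violation comparison lemma: if each `|gⱼ|` starts strictly below `uⱼ` and, whenever
all components satisfy `|gᵢ t| ≤ uᵢ t`, the derivatives satisfy `|g'ⱼ t| ≤ u'ⱼ t`, then the
strict bounds persist on all of `[0, T]`. -/
lemma myEscape {ι : Type*} [Finite ι] {T : ℝ}
    (g g' u u' : ι → ℝ → ℝ)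
    (hg : ∀ j, ∀ t ∈ Icc (0:ℝ) T, HasDerivWithinAt (g j) (g' j t) (Icc (0:ℝ) T) t)
    (hu : ∀ j t, HasDerivAt (u j) (u' j t) t)
    (hinit : ∀ j, |g j 0| < u j 0)
    (hstep : ∀ t ∈ Icc (0:ℝ) T, (∀ i, |g i t| ≤ u i t) → ∀ j, |g' j t| ≤ u' j t) :
    ∀ t ∈ Icc (0:ℝ) T, ∀ j, |g j t| < u j t := by
  by_contra hcon
  push_neg at hcon
  obtain ⟨t₁, ht₁, j₁, hj₁⟩ := hcon
  have hgc : ∀ j, ContinuousOn (g j) (Icc 0 T) :=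
    fun j => fun t ht => (hg j t ht).continuousWithinAt
  have huc : ∀ j, Continuous (u j) := fun j => by
    have : Differentiable ℝ (u j) := fun t => (hu j t).differentiableAt
    exact this.continuous
  set S : Set ℝ := ⋃ j, {t ∈ Icc (0:ℝ) T | u j t ≤ |g j t|} with hS
  have hScl : IsClosed S := by
    apply isClosed_iUnion_of_finite
    intro j
    have : ContinuousOn (fun t => |g j t| - u j t) (Icc 0 T) :=
      ((hgc j).abs.sub (huc j).continuousOn)
    have h2 : {t ∈ Icc (0:ℝ) T | u j t ≤ |g j t|}
        = Icc (0:ℝ) T ∩ (fun t => |g j t| - u j t) ⁻¹' Ici 0 := by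
      ext t; simp [sub_nonneg]
    rw [h2]
    exact this.preimage_isClosed_of_isClosed isClosed_Icc isClosed_Ici
  have hSne : S.Nonempty := ⟨t₁, Set.mem_iUnion.2 ⟨j₁, ⟨ht₁, hj₁⟩⟩⟩
  have hSbdd : BddBelow S := ⟨0, fun t ht => by
    obtain ⟨j, htj⟩ := Set.mem_iUnion.1 ht; exact htj.1.1⟩
  set t' := sInf S with ht'
  have ht'S : t' ∈ S := hScl.csInf_mem hSne hSbdd
  obtain ⟨j₀, ht'Icc, hj₀⟩ : ∃ j, t' ∈ Icc (0:ℝ) T ∧ u j t' ≤ |g j t'| := by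
    obtain ⟨j, htj⟩ := Set.mem_iUnion.1 ht'S; exact ⟨j, htj.1, htj.2⟩
  have ht'0 : 0 < t' := by
    rcases eq_or_lt_of_le ht'Icc.1 with h0 | h0
    · exfalso; rw [← h0] at hj₀; exact absurd hj₀ (not_le.2 (hinit j₀))
    · exact h0
  -- all bounds hold (non-strictly) on [0, t']
  have hle : ∀ s ∈ Icc (0:ℝ) t', ∀ i, |g i s| ≤ u i s := by
    intro s hs i
    rcases eq_or_lt_of_le hs.2 with hseq | hslt
    · -- s = t' : continuity argument
      have hs0 : 0 < s := hseq ▸ ht'0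
      have hcl : s ∈ closure (Ico (0:ℝ) s) := by
        rw [closure_Ico (ne_of_lt hs0)]; exact ⟨hs.1, le_refl _⟩
      have hφc : ContinuousWithinAt (fun r => u i r - |g i r|) (Ico (0:ℝ) s) s :=
        ContinuousWithinAt.mono
          (((huc i).continuousOn.sub (hgc i).abs) s ⟨hs.1, hseq ▸ ht'Icc.2⟩)
          (fun r hr => ⟨hr.1, le_trans (le_of_lt hr.2) (hseq ▸ ht'Icc.2)⟩)
      have hnb : (𝓝[Ico (0:ℝ) s] s).NeBot := mem_closure_iff_nhdsWithin_neBot.1 hcl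
      have hev : ∀ᶠ r in 𝓝[Ico (0:ℝ) s] s, 0 ≤ u i r - |g i r| := by
        apply eventually_nhdsWithin_of_forall
        intro r hr
        have hrt : r < sInf S := lt_of_lt_of_le hr.2 (le_of_eq (hseq.trans ht'))
        have hrS : r ∉ S := fun hrS => absurd (csInf_le hSbdd hrS) (not_le.2 hrt)
        have : ¬ (u i r ≤ |g i r|) := fun hc =>
          hrS (Set.mem_iUnion.2 ⟨i, ⟨⟨hr.1, le_trans (le_of_lt hr.2) (hseq ▸ ht'Icc.2)⟩, hc⟩⟩)
        linarith [not_le.1 this]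
      have := ge_of_tendsto hφc hev
      simpa [sub_nonneg] using this
    · -- s < t' : s not in S
      have hrS : s ∉ S := fun hrS => absurd (csInf_le hSbdd hrS) (not_le.2 hslt)
      have : ¬ (u i s ≤ |g i s|) := fun hc =>
        hrS (Set.mem_iUnion.2 ⟨i, ⟨⟨hs.1, le_trans hs.2 ht'Icc.2⟩, hc⟩⟩)
      linarith [not_le.1 this]
  -- hence the derivative bounds hold on [0, t']
  have hder : ∀ s ∈ Icc (0:ℝ) t', |g' j₀ s| ≤ u' j₀ s := by
    intro s hs
    exact hstep s ⟨hs.1, le_trans hs.2 ht'Icc.2⟩ (hle s hs) j₀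
  -- monotonicity of u ∓ g
  have hmono : ∀ (σ : ℝ), σ = 1 ∨ σ = -1 →
      MonotoneOn (fun s => u j₀ s - σ * g j₀ s) (Icc (0:ℝ) t') := by
    intro σ hσ
    apply monotoneOn_of_hasDerivWithinAt_nonneg (f' := fun s => u' j₀ s - σ * g' j₀ s)
      (convex_Icc _ _)
    · apply ContinuousOn.sub ((huc j₀).continuousOn)
      exact continuousOn_const.mul ((hgc j₀).mono
        (fun r hr => ⟨hr.1, le_trans hr.2 ht'Icc.2⟩))
    · intro x hx
      rw [interior_Icc] at hx
      have hgd : HasDerivAt (g j₀) (g' j₀ x) x := by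
        apply (hg j₀ x ⟨le_of_lt hx.1, le_trans (le_of_lt hx.2) ht'Icc.2⟩).hasDerivAt
        apply Icc_mem_nhds hx.1 (lt_of_lt_of_le hx.2 ht'Icc.2)
      exact (((hu j₀ x).sub ((hgd.const_mul σ))).hasDerivWithinAt)
    · intro x hx
      rw [interior_Icc] at hx
      have := hder x ⟨le_of_lt hx.1, le_of_lt hx.2⟩
      rcases hσ with h | h <;> subst h <;>
        cases abs_le.1 this <;> cases abs_le.1 (le_refl |g' j₀ x|) <;>
          simp only [one_mul, neg_one_mul] <;> linarith [abs_le.1 this, neg_abs_le (g' j₀ x),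
            le_abs_self (g' j₀ x)]
  have h0m : (0:ℝ) ∈ Icc (0:ℝ) t' := ⟨le_refl _, le_of_lt ht'0⟩
  have htm : t' ∈ Icc (0:ℝ) t' := ⟨le_of_lt ht'0, le_refl _⟩
  have m1 := hmono 1 (Or.inl rfl) h0m htm (le_of_lt ht'0)
  have m2 := hmono (-1) (Or.inr rfl) h0m htm (le_of_lt ht'0)
  simp only [one_mul, neg_one_mul, sub_neg_eq_add] at m1 m2
  have hinit' := hinit j₀
  have := abs_le.1 (le_refl |g j₀ 0|)
  have habs : |g j₀ t'| < u j₀ t' := by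
    rw [abs_lt]
    constructor <;> [nlinarith [neg_abs_le (g j₀ 0)]; nlinarith [le_abs_self (g j₀ 0)]]
  exact absurd hj₀ (not_le.2 habs)


lemma myE1 (N : ℕ) (x : Fin N → ℝ) (m : ℝ) (hm : 1 ≤ m)
    (hyp : ∀ i : Fin N, |x i| ≤ m ^ ((i : ℕ) + 1)) :
    ∀ n : ℕ, n < N → |extComp N x (n : ℤ)| ≤ m ^ n := by
  intro n hn
  match n, hn with
  | 0, _ => simp [extComp_zero]
  | (j+1), hj =>
    rw [show (((j+1 : ℕ) : ℤ)) = ((j : ℤ) + 1) by push_cast; ring,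
      extComp_succ N x j (by omega)]
    exact hyp ⟨j, by omega⟩

lemma myE2 (N : ℕ) (x : Fin N → ℝ) (m C₀ : ℝ) (hm : 1 ≤ m) (hC₀ : 0 ≤ C₀)
    (hyp : ∀ i : Fin N, |x i| ≤ m ^ ((i : ℕ) + 1))
    (cval : ℝ) (hc : |cval| ≤ C₀ * m ^ 2) :
    ∀ n : ℕ, n < N →
      ((n : ℝ) + 1) * n / 2 * |cval| * |extComp N x ((n : ℤ) - 1)|
        ≤ (N : ℝ) ^ 2 * C₀ * m ^ (n + 1) := by
  intro n hn
  have hm0 : (0:ℝ) < m := lt_of_lt_of_le one_pos hm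
  match n, hn with
  | 0, _ =>
    norm_num
    positivity
  | 1, hj =>
    have he : (((1 : ℕ) : ℤ) - 1 : ℤ) = 0 := by norm_num
    rw [he, extComp_zero, abs_one, mul_one]
    have hN2 : (2:ℝ) ≤ (N : ℝ) := by exact_mod_cast hj
    push_cast
    have h4 : C₀ * m ^ 2 ≤ (N : ℝ) ^ 2 * (C₀ * m ^ 2) :=
      le_mul_of_one_le_left (by positivity) (by nlinarith)
    calc (1 + 1) * 1 / 2 * |cval| = |cval| := by ring
      _ ≤ C₀ * m ^ 2 := hc
      _ ≤ (N : ℝ) ^ 2 * (C₀ * m ^ 2) := h4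
      _ = (N : ℝ) ^ 2 * C₀ * m ^ (1 + 1) := by ring
  | (j+2), hj =>
    have he : (((j + 2 : ℕ) : ℤ) - 1 : ℤ) = ((j : ℤ) + 1) := by push_cast; ring
    rw [he, extComp_succ N x j (by omega)]
    have hxj : |x ⟨j, by omega⟩| ≤ m ^ (j + 1) := hyp ⟨j, by omega⟩
    have hpow2 : m ^ 2 * m ^ (j + 1) = m ^ (j + 3) := by
      rw [← pow_add]; congr 1; omega
    have hNj : ((j : ℝ) + 2) + 1 ≤ (N : ℝ) := by
      have : j + 3 ≤ N := by omega
      exact_mod_cast this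
    have hcoef : ((j : ℝ) + 2 + 1) * ((j : ℝ) + 2) / 2 ≤ (N : ℝ) ^ 2 := by
      nlinarith [Nat.cast_nonneg (α := ℝ) j]
    have hp1 : (0:ℝ) < m ^ (j+1) := by positivity
    have hcv : (0:ℝ) ≤ |cval| := abs_nonneg _
    have hmain : |cval| * m ^ (j + 1) ≤ C₀ * m ^ (j + 3) := by
      calc |cval| * m ^ (j + 1) ≤ C₀ * m ^ 2 * m ^ (j + 1) :=
            mul_le_mul_of_nonneg_right hc hp1.le
        _ = C₀ * m ^ (j + 3) := by rw [mul_assoc, hpow2]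
    push_cast
    calc ((j : ℝ) + 2 + 1) * ((j : ℝ) + 2) / 2 * |cval| * |x ⟨j, by omega⟩|
        = (((j : ℝ) + 2 + 1) * ((j : ℝ) + 2) / 2) * (|cval| * |x ⟨j, by omega⟩|) := by ring
      _ ≤ (N : ℝ) ^ 2 * (|cval| * m ^ (j + 1)) := by
          apply mul_le_mul hcoef (mul_le_mul_of_nonneg_left hxj hcv) (by positivity)
            (by positivity)
      _ ≤ (N : ℝ) ^ 2 * (C₀ * m ^ (j + 3)) :=
          mul_le_mul_of_nonneg_left hmain (by positivity)
      _ = (N : ℝ) ^ 2 * C₀ * m ^ (j + 2 + 1) := by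
          rw [show j + 2 + 1 = j + 3 from rfl]; ring

set_option maxHeartbeats 4000000 in
open Real in
/-- A priori bound: any solution of the moment system on `[0,T]`, `T ≤ T₀`, starting at `ζ`,
is bounded by a constant depending only on the data, `ζ` and `T₀`. -/
lemma myApriori (N : ℕ) (hN : 0 < N)
    (b β c γ Γ : (Fin N → ℝ) → ℝ)
    (b₀ β₀ c₀ γ₀ Γ₀ : ℝ) (hb₀ : 0 ≤ b₀) (hβ₀ : 0 ≤ β₀) (hc₀ : 0 ≤ c₀)
    (hγ₀ : 0 ≤ γ₀) (hΓ₀ : 0 ≤ Γ₀)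
    (f_c f_γ : ℝ → ℝ)
    (hfc_mono : MonotoneOn f_c (Set.Ici 0))
    (hfc_nonneg : ∀ s ∈ Set.Ici (0 : ℝ), 0 ≤ f_c s)
    (hfγ_mono : MonotoneOn f_γ (Set.Ici 0))
    (hfγ_nonneg : ∀ s ∈ Set.Ici (0 : ℝ), 0 ≤ f_γ s)
    (hβb : ∀ x, |β x| ≤ β₀) (hΓb : ∀ x, |Γ x| ≤ Γ₀)
    (hbb : ∀ x : Fin N → ℝ, |b x| ≤ b₀ * (1 + |x ⟨0, hN⟩|))
    (hγb : ∀ x : Fin N → ℝ, |γ x| ≤ γ₀ * (1 + f_γ |x ⟨0, hN⟩| + normN N x))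
    (hcb : ∀ x : Fin N → ℝ, |c x| ≤ c₀ * (1 + f_c |x ⟨0, hN⟩| + (normN N x) ^ 2))
    (ζ : Fin N → ℝ) (T₀ : ℝ) (hT₀ : 0 ≤ T₀) :
    ∃ ρ : ℝ, 0 ≤ ρ ∧ ∀ T, 0 ≤ T → T ≤ T₀ → ∀ w : ℝ → Fin N → ℝ, w 0 = ζ →
      (∀ k : Fin N, ∀ t ∈ Icc (0:ℝ) T,
        HasDerivWithinAt (fun s => w s k) (momentRHS N b β c γ Γ (w t) k) (Icc (0:ℝ) T) t) →
      ∀ t ∈ Icc (0:ℝ) T, ∀ k, |w t k| ≤ ρ := by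
  classical
  set P : ℝ := 1 + ∑ j : Fin N, |ζ j| with hPdef
  have hP1 : 1 ≤ P := by
    have h0 : 0 ≤ ∑ j : Fin N, |ζ j| := Finset.sum_nonneg fun j _ => abs_nonneg _
    simp only [hPdef]; linarith only [h0]
  have hPj : ∀ j, |ζ j| < P := by
    intro j
    have : |ζ j| ≤ ∑ j : Fin N, |ζ j| :=
      Finset.single_le_sum (fun i _ => abs_nonneg (ζ i)) (Finset.mem_univ j)
    simp only [hPdef]; linarith only [this]
  set KA : ℝ := β₀ + 2 * b₀ + 1 with hKA
  have hKA0 : 0 < KA := by simp only [hKA]; linarith only [hβ₀, hb₀]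
  set B : ℝ := P * Real.exp (KA * T₀) with hBdef
  have hB1 : 1 ≤ B := by
    have h0 : 1 ≤ Real.exp (KA * T₀) := Real.one_le_exp (by positivity)
    simp only [hBdef]; nlinarith only [h0, hP1]
  set G : ℝ := f_γ B with hGdef
  set H : ℝ := f_c B with hHdef
  have hG0 : 0 ≤ G := hfγ_nonneg B (by simp only [Set.mem_Ici]; linarith)
  have hH0 : 0 ≤ H := hfc_nonneg B (by simp only [Set.mem_Ici]; linarith)
  set K1 : ℝ := ((N:ℝ) + (N:ℝ)^2) *
    (β₀ + Γ₀ + b₀ * (1 + B) + γ₀ * (1 + G + Real.sqrt N) + c₀ * (1 + H + N)) with hK1def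
  have hK10 : 0 ≤ K1 := by
    have hs : (0:ℝ) ≤ Real.sqrt N := Real.sqrt_nonneg _
    have hn : (0:ℝ) ≤ (N:ℝ) := Nat.cast_nonneg _
    simp only [hK1def]; positivity
  set K : ℝ := K1 + 1 with hKdef
  have hK0 : 0 < K := by simp only [hKdef]; linarith only [hK10]
  refine ⟨(P * Real.exp (K * T₀)) ^ N, by positivity, ?_⟩
  intro T hT hTT₀ w hw0 hw
  -- Stage 1: bound on the first component
  have stage1 : ∀ t ∈ Icc (0:ℝ) T, |w t ⟨0, hN⟩| ≤ B := by
    have hesc := myEscape (ι := Unit) (T := T)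
      (fun _ s => w s ⟨0, hN⟩)
      (fun _ t => momentRHS N b β c γ Γ (w t) ⟨0, hN⟩)
      (fun _ s => P * Real.exp (KA * s))
      (fun _ s => P * KA * Real.exp (KA * s))
      (fun _ => hw ⟨0, hN⟩)
      (fun _ t => by
        have h1 : HasDerivAt (fun s : ℝ => KA * s) KA t := by
          simpa using (hasDerivAt_id t).const_mul KA
        have h2 := (h1.exp).const_mul P
        exact h2.congr_deriv (by ring))
      (fun _ => by
        show |w 0 ⟨0, hN⟩| < P * Real.exp (KA * 0)
        rw [hw0]
        have : Real.exp (KA * 0) = 1 := by norm_num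
        rw [this]
        have h1 := hPj ⟨0, hN⟩
        linarith only [h1])
      ?_
    · intro t ht
      have h' : |w t ⟨0, hN⟩| < P * Real.exp (KA * t) := hesc t ht ()
      have hle : P * Real.exp (KA * t) ≤ B := by
        have h2 : Real.exp (KA * t) ≤ Real.exp (KA * T₀) :=
          Real.exp_le_exp.2 (mul_le_mul_of_nonneg_left (le_trans ht.2 hTT₀) hKA0.le)
        simp only [hBdef]
        nlinarith only [h2, hP1]
      linarith only [h', hle]
    · -- derivative bound for the first component
      intro t ht hyp _
      show |momentRHS N b β c γ Γ (w t) ⟨0, hN⟩| ≤ P * KA * Real.exp (KA * t)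
      have hx : |w t ⟨0, hN⟩| ≤ P * Real.exp (KA * t) := hyp ()
      set x : Fin N → ℝ := w t with hx'
      rw [momentRHS_zero N hN]
      have hu1 : 1 ≤ P * Real.exp (KA * t) := by
        have h0 : 1 ≤ Real.exp (KA * t) := Real.one_le_exp (mul_nonneg hKA0.le ht.1)
        nlinarith only [h0, hP1]
      have h1 : |β x * x ⟨0, hN⟩ + b x| ≤ |β x| * |x ⟨0, hN⟩| + |b x| := by
        refine (abs_add_le _ _).trans ?_
        rw [abs_mul]
      have h2 : |β x| * |x ⟨0, hN⟩| ≤ β₀ * (P * Real.exp (KA * t)) :=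
        mul_le_mul (hβb x) hx (abs_nonneg _) hβ₀
      have h3 : |b x| ≤ b₀ * (1 + P * Real.exp (KA * t)) :=
        le_trans (hbb x) (mul_le_mul_of_nonneg_left (by linarith only [hx]) hb₀)
      calc |β x * x ⟨0, hN⟩ + b x| ≤ β₀ * (P * Real.exp (KA * t))
            + b₀ * (1 + P * Real.exp (KA * t)) := by linarith
        _ ≤ P * KA * Real.exp (KA * t) := by
            simp only [hKA]; nlinarith only [hu1, hb₀, hβ₀]
  -- Stage 2: bound on all components
  have stage2 : ∀ t ∈ Icc (0:ℝ) T, ∀ k : Fin N,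
      |w t k| < (P * Real.exp (K * t)) ^ ((k : ℕ) + 1) := by
    have hesc := myEscape (ι := Fin N) (T := T)
      (fun k s => w s k)
      (fun k t => momentRHS N b β c γ Γ (w t) k)
      (fun k s => (P * Real.exp (K * s)) ^ ((k : ℕ) + 1))
      (fun k s => (((k : ℕ) : ℝ) + 1) * K * (P * Real.exp (K * s)) ^ ((k : ℕ) + 1))
      hw
      (fun k t => by
        have h0 : HasDerivAt (fun s : ℝ => K * s) K t := by
          simpa using (hasDerivAt_id t).const_mul K
        have h1 : HasDerivAt (fun s : ℝ => P * Real.exp (K * s)) (P * K * Real.exp (K * t)) t := by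
          have := (h0.exp).const_mul P
          exact this.congr_deriv (by ring)
        have h2 := h1.pow ((k : ℕ) + 1)
        refine h2.congr_deriv ?_
        simp only [Nat.add_sub_cancel]
        rw [pow_succ]
        push_cast
        ring)
      (fun k => by
        show |w 0 k| < (P * Real.exp (K * 0)) ^ ((k : ℕ) + 1)
        rw [hw0]
        have he : Real.exp (K * 0) = 1 := by norm_num
        rw [he, mul_one]
        calc |ζ k| < P := hPj k
          _ = P ^ 1 := (pow_one P).symm
          _ ≤ P ^ ((k : ℕ) + 1) := pow_le_pow_right₀ hP1 (by omega))
      ?_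
    · exact hesc
    · -- the derivative bound
      intro t ht hyp k
      show |momentRHS N b β c γ Γ (w t) k| ≤
        (((k : ℕ) : ℝ) + 1) * K * (P * Real.exp (K * t)) ^ ((k : ℕ) + 1)
      set m : ℝ := P * Real.exp (K * t) with hmdef
      have hm1 : 1 ≤ m := by
        have h0 : 1 ≤ Real.exp (K * t) := Real.one_le_exp (mul_nonneg hK0.le ht.1)
        simp only [hmdef]; nlinarith only [h0, hP1]
      have hm0 : 0 < m := lt_of_lt_of_le one_pos hm1
      set x : Fin N → ℝ := w t with hxdef
      have hyp' : ∀ i : Fin N, |x i| ≤ m ^ ((i : ℕ) + 1) := fun i => hyp i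
      set n : ℕ := (k : ℕ) with hndef
      have hnN : n < N := k.2
      have hnNr : (n : ℝ) + 1 ≤ (N : ℝ) := by exact_mod_cast hnN
      have hNr0 : (0:ℝ) ≤ (N : ℝ) := Nat.cast_nonneg _
      have hnr0 : (0:ℝ) ≤ (n : ℝ) := Nat.cast_nonneg _
      have hc2 : ((n : ℝ) + 1) * n / 2 ≤ (N : ℝ) ^ 2 := by
        nlinarith only [hnNr, hnr0, hNr0]
      have hc1 : ((n : ℝ) + 1) ≤ (N : ℝ) := hnNr
      -- bounds on coefficients
      have hb1comp : |x ⟨0, hN⟩| ≤ B := stage1 t ht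
      have hbx : |b x| ≤ b₀ * (1 + B) :=
        le_trans (hbb x) (mul_le_mul_of_nonneg_left (by linarith only [hb1comp]) hb₀)
      have hBmem : B ∈ Set.Ici (0:ℝ) := by simp only [Set.mem_Ici]; linarith
      have hfγx : f_γ |x ⟨0, hN⟩| ≤ G := by
        simp only [hGdef]
        exact hfγ_mono (by simp only [Set.mem_Ici]; exact abs_nonneg _) hBmem hb1comp
      have hfcx : f_c |x ⟨0, hN⟩| ≤ H := by
        simp only [hHdef]
        exact hfc_mono (by simp only [Set.mem_Ici]; exact abs_nonneg _) hBmem hb1comp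
      -- norm bounds
      have hsum_nonneg : 0 ≤ ∑ i : Fin N, |x i| ^ ((2:ℝ) / ((i : ℕ) + 1)) :=
        Finset.sum_nonneg fun i _ => Real.rpow_nonneg (abs_nonneg _) _
      have hsum : ∑ i : Fin N, |x i| ^ ((2:ℝ) / ((i : ℕ) + 1)) ≤ (N : ℝ) * m ^ 2 := by
        have hterm : ∀ i : Fin N, |x i| ^ ((2:ℝ) / ((i : ℕ) + 1)) ≤ m ^ 2 := by
          intro i
          have h1 : |x i| ^ ((2:ℝ) / ((i : ℕ) + 1)) ≤
              (m ^ ((i : ℕ) + 1)) ^ ((2:ℝ) / ((i : ℕ) + 1)) :=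
            Real.rpow_le_rpow (abs_nonneg _) (hyp' i) (by positivity)
          have h2 : (m ^ ((i : ℕ) + 1)) ^ ((2:ℝ) / ((i : ℕ) + 1)) = m ^ 2 := by
            rw [← Real.rpow_natCast m ((i : ℕ) + 1), ← Real.rpow_mul hm0.le]
            rw [show (((i : ℕ) + 1 : ℕ) : ℝ) * ((2:ℝ) / ((i : ℕ) + 1)) = 2 by
              push_cast; field_simp]
            rw [show ((2:ℝ)) = ((2:ℕ):ℝ) by norm_num, Real.rpow_natCast]
          rw [h2] at h1
          exact h1
        calc ∑ i : Fin N, |x i| ^ ((2:ℝ) / ((i : ℕ) + 1)) ≤ ∑ _i : Fin N, m ^ 2 :=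
              Finset.sum_le_sum fun i _ => hterm i
          _ = (N : ℝ) * m ^ 2 := by
              rw [Finset.sum_const, Finset.card_univ, Fintype.card_fin, nsmul_eq_mul]
      have hnorm : normN N x ≤ Real.sqrt N * m := by
        rw [normN]
        calc Real.sqrt (∑ i : Fin N, |x i| ^ ((2:ℝ) / ((i : ℕ) + 1)))
            ≤ Real.sqrt ((N : ℝ) * m ^ 2) := Real.sqrt_le_sqrt hsum
          _ = Real.sqrt N * m := by
              rw [Real.sqrt_mul hNr0, Real.sqrt_sq hm0.le]
      have hnorm0 : 0 ≤ normN N x := Real.sqrt_nonneg _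
      have hnorm2 : (normN N x) ^ 2 ≤ (N : ℝ) * m ^ 2 := by
        rw [normN, Real.sq_sqrt hsum_nonneg]
        exact hsum
      have hγx : |γ x| ≤ γ₀ * (1 + G + Real.sqrt N * m) := by
        refine le_trans (hγb x) (mul_le_mul_of_nonneg_left ?_ hγ₀)
        linarith
      have hcx : |c x| ≤ c₀ * (1 + H + (N : ℝ) * m ^ 2) := by
        refine le_trans (hcb x) (mul_le_mul_of_nonneg_left ?_ hc₀)
        linarith
      -- extComp bounds
      have hE1 : |extComp N x ((n : ℕ) : ℤ)| ≤ m ^ n := myE1 N x m hm1 hyp' n hnN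
      -- the three terms
      have habs : |momentRHS N b β c γ Γ x k| ≤
          |((n : ℝ) + 1) * β x + ((n : ℝ) + 1) * n / 2 * Γ x| * |x k|
          + |((n : ℝ) + 1) * b x + ((n : ℝ) + 1) * n / 2 * γ x| * |extComp N x ((n : ℕ) : ℤ)|
          + ((n : ℝ) + 1) * n / 2 * |c x| * |extComp N x (((n : ℕ) : ℤ) - 1)| := by
        rw [momentRHS]
        refine le_trans (abs_add_le _ _) ?_
        gcongr
        · refine le_trans (abs_add_le _ _) ?_
          rw [abs_mul, abs_mul]
        · rw [abs_mul, abs_mul]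
          have hcoef : |((n : ℝ) + 1) * n / 2| = ((n : ℝ) + 1) * n / 2 :=
            abs_of_nonneg (by positivity)
          rw [hcoef]
      have hxk : |x k| ≤ m ^ (n + 1) := hyp' k
      have hA : |((n : ℝ) + 1) * β x + ((n : ℝ) + 1) * n / 2 * Γ x|
          ≤ (N : ℝ) * β₀ + (N : ℝ) ^ 2 * Γ₀ := by
        refine le_trans (abs_add_le _ _) ?_
        rw [abs_mul, abs_mul, abs_of_nonneg (show (0:ℝ) ≤ (n : ℝ) + 1 by positivity),
          abs_of_nonneg (show (0:ℝ) ≤ ((n : ℝ) + 1) * n / 2 by positivity)]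
        have e1 : ((n : ℝ) + 1) * |β x| ≤ (N : ℝ) * β₀ :=
          mul_le_mul hc1 (hβb x) (abs_nonneg _) hNr0
        have e2 : ((n : ℝ) + 1) * n / 2 * |Γ x| ≤ (N : ℝ) ^ 2 * Γ₀ :=
          mul_le_mul hc2 (hΓb x) (abs_nonneg _) (sq_nonneg _)
        linarith
      have hBc : |((n : ℝ) + 1) * b x + ((n : ℝ) + 1) * n / 2 * γ x|
          ≤ (N : ℝ) * (b₀ * (1 + B)) + (N : ℝ) ^ 2 * (γ₀ * (1 + G + Real.sqrt N * m)) := by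
        refine le_trans (abs_add_le _ _) ?_
        rw [abs_mul, abs_mul, abs_of_nonneg (show (0:ℝ) ≤ (n : ℝ) + 1 by positivity),
          abs_of_nonneg (show (0:ℝ) ≤ ((n : ℝ) + 1) * n / 2 by positivity)]
        have e1 : ((n : ℝ) + 1) * |b x| ≤ (N : ℝ) * (b₀ * (1 + B)) :=
          mul_le_mul hc1 hbx (abs_nonneg _) hNr0
        have e2 : ((n : ℝ) + 1) * n / 2 * |γ x| ≤ (N : ℝ) ^ 2 * (γ₀ * (1 + G + Real.sqrt N * m)) :=
          mul_le_mul hc2 hγx (abs_nonneg _) (sq_nonneg _)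
        linarith
      -- term 3 bound
      have hm2 : (1:ℝ) ≤ m ^ 2 := by nlinarith only [hm1]
      have hH2 : H ≤ H * m ^ 2 := by linarith only [mul_nonneg hH0 (sub_nonneg.2 hm2)]
      have hccv : |c x| ≤ (c₀ * (1 + H + (N : ℝ))) * m ^ 2 := by
        have hNm2 : (N : ℝ) * m ^ 2 ≤ (N : ℝ) * m ^ 2 := le_refl _
        have hin : 1 + H + (N:ℝ) * m ^ 2 ≤ (1 + H + (N:ℝ)) * m ^ 2 := by
          nlinarith only [hm2, hH2]
        calc |c x| ≤ c₀ * (1 + H + (N : ℝ) * m ^ 2) := hcx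
          _ ≤ c₀ * ((1 + H + (N : ℝ)) * m ^ 2) := mul_le_mul_of_nonneg_left hin hc₀
          _ = (c₀ * (1 + H + (N : ℝ))) * m ^ 2 := by ring
      have hT3 : ((n : ℝ) + 1) * n / 2 * |c x| * |extComp N x (((n : ℕ) : ℤ) - 1)|
          ≤ (N : ℝ) ^ 2 * (c₀ * (1 + H + (N : ℝ))) * m ^ (n + 1) :=
        myE2 N x m (c₀ * (1 + H + (N : ℝ))) hm1 (by positivity) hyp' (c x) hccv n hnN
      -- putting everything together
      have hmn1 : (0:ℝ) < m ^ (n + 1) := by positivity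
      have hmn : (0:ℝ) < m ^ n := by positivity
      have hstepm : m ^ n ≤ m ^ (n + 1) := pow_le_pow_right₀ hm1 (by omega)
      have hsqN : (0:ℝ) ≤ Real.sqrt N := Real.sqrt_nonneg _
      have hT2' : |((n : ℝ) + 1) * b x + ((n : ℝ) + 1) * n / 2 * γ x|
            * |extComp N x ((n : ℕ) : ℤ)|
          ≤ ((N : ℝ) * (b₀ * (1 + B)) + (N : ℝ) ^ 2 * (γ₀ * (1 + G + Real.sqrt N)))
            * m ^ (n + 1) := by
        have h1 : |((n : ℝ) + 1) * b x + ((n : ℝ) + 1) * n / 2 * γ x|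
              * |extComp N x ((n : ℕ) : ℤ)|
            ≤ ((N : ℝ) * (b₀ * (1 + B)) + (N : ℝ) ^ 2 * (γ₀ * (1 + G + Real.sqrt N * m)))
              * m ^ n :=
          mul_le_mul hBc hE1 (abs_nonneg _) (by positivity)
        refine le_trans h1 ?_
        have e1 : (N : ℝ) * (b₀ * (1 + B)) * m ^ n ≤ (N : ℝ) * (b₀ * (1 + B)) * m ^ (n+1) := by
          apply mul_le_mul_of_nonneg_left hstepm (by positivity)
        have e2 : (N : ℝ) ^ 2 * (γ₀ * (1 + G + Real.sqrt N * m)) * m ^ n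
            ≤ (N : ℝ) ^ 2 * (γ₀ * (1 + G + Real.sqrt N)) * m ^ (n+1) := by
          have q1 : (1 + G + Real.sqrt N * m) * m ^ n ≤ (1 + G + Real.sqrt N) * m ^ (n+1) := by
            have q2 : Real.sqrt N * m * m ^ n = Real.sqrt N * m ^ (n+1) := by
              rw [pow_succ]; ring
            nlinarith only [q2, hstepm, mul_le_mul_of_nonneg_left hstepm hG0, hsqN]
          calc (N : ℝ) ^ 2 * (γ₀ * (1 + G + Real.sqrt N * m)) * m ^ n
              = (N : ℝ) ^ 2 * γ₀ * ((1 + G + Real.sqrt N * m) * m ^ n) := by ring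
            _ ≤ (N : ℝ) ^ 2 * γ₀ * ((1 + G + Real.sqrt N) * m ^ (n+1)) := by
                apply mul_le_mul_of_nonneg_left q1 (by positivity)
            _ = (N : ℝ) ^ 2 * (γ₀ * (1 + G + Real.sqrt N)) * m ^ (n+1) := by ring
        linarith only [e1, e2]
      have hT1' : |((n : ℝ) + 1) * β x + ((n : ℝ) + 1) * n / 2 * Γ x| * |x k|
          ≤ ((N : ℝ) * β₀ + (N : ℝ) ^ 2 * Γ₀) * m ^ (n + 1) :=
        mul_le_mul hA hxk (abs_nonneg _) (by positivity)
      have htotal : |momentRHS N b β c γ Γ x k| ≤ K1 * m ^ (n + 1) := by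
        refine le_trans habs ?_
        have hK1ge : (N : ℝ) * β₀ + (N : ℝ) ^ 2 * Γ₀
            + ((N : ℝ) * (b₀ * (1 + B)) + (N : ℝ) ^ 2 * (γ₀ * (1 + G + Real.sqrt N)))
            + (N : ℝ) ^ 2 * (c₀ * (1 + H + (N : ℝ))) ≤ K1 := by
          simp only [hK1def]
          have p1 : (0:ℝ) ≤ (N:ℝ) := hNr0
          have p2 : (0:ℝ) ≤ (N:ℝ)^2 := sq_nonneg _
          have q1 : (0:ℝ) ≤ β₀ := hβ₀
          have q2 : (0:ℝ) ≤ Γ₀ := hΓ₀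
          have q3 : (0:ℝ) ≤ b₀ * (1 + B) := by positivity
          have q4 : (0:ℝ) ≤ γ₀ * (1 + G + Real.sqrt N) := by positivity
          have q5 : (0:ℝ) ≤ c₀ * (1 + H + (N:ℝ)) := by positivity
          linarith only [mul_nonneg p2 q1, mul_nonneg p1 q2, mul_nonneg p2 q3,
            mul_nonneg p1 q4, mul_nonneg p1 q5]
        linarith only [hT1', hT2', hT3, mul_le_mul_of_nonneg_right hK1ge hmn1.le]
      refine le_trans htotal ?_
      have : K1 * m ^ (n + 1) ≤ 1 * (K * m ^ (n + 1)) := by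
        rw [one_mul]
        apply mul_le_mul_of_nonneg_right (by simp only [hKdef]; linarith only [hK10]) hmn1.le
      calc K1 * m ^ (n + 1) ≤ 1 * (K * m ^ (n + 1)) := this
        _ ≤ ((n : ℝ) + 1) * (K * m ^ (n + 1)) := by
            apply mul_le_mul_of_nonneg_right (by linarith only [hnr0]) (by positivity)
        _ = ((n : ℝ) + 1) * K * m ^ (n + 1) := by ring
  -- conclusion
  intro t ht k
  have h := stage2 t ht k
  have hexp : Real.exp (K * t) ≤ Real.exp (K * T₀) :=
    Real.exp_le_exp.2 (mul_le_mul_of_nonneg_left (le_trans ht.2 hTT₀) hK0.le)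
  have hbase : P * Real.exp (K * t) ≤ P * Real.exp (K * T₀) := by
    nlinarith only [hexp, hP1]
  have hb1 : 1 ≤ P * Real.exp (K * t) := by
    have h0 : 1 ≤ Real.exp (K * t) := Real.one_le_exp (mul_nonneg hK0.le ht.1)
    nlinarith only [h0, hP1]
  calc |w t k| ≤ (P * Real.exp (K * t)) ^ ((k : ℕ) + 1) := le_of_lt h
    _ ≤ (P * Real.exp (K * T₀)) ^ ((k : ℕ) + 1) := by
        apply pow_le_pow_left₀ (by positivity) hbase
    _ ≤ (P * Real.exp (K * T₀)) ^ N :=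
        pow_le_pow_right₀ (le_trans hb1 hbase) k.2

lemma myHasDerivWithinAt_singleton {N' : ℕ} (f : ℝ → (Fin N' → ℝ)) (x : ℝ) (f' : Fin N' → ℝ) :
    HasDerivWithinAt f f' {x} x := by
  rw [hasDerivWithinAt_iff_tendsto_slope]
  simp [Set.diff_self]

lemma myLL_F (N : ℕ) (b β c γ Γ : (Fin N → ℝ) → ℝ)
    (hbl : LocallyLipschitz b) (hβl : LocallyLipschitz β) (hcl : LocallyLipschitz c)
    (hγl : LocallyLipschitz γ) (hΓl : LocallyLipschitz Γ) :
    LocallyLipschitz (fun x => (fun k => momentRHS N b β c γ Γ x k)) := by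
  apply myLL.pi
  intro k
  have hcoord : ∀ i : Fin N, LocallyLipschitz (fun x : Fin N → ℝ => x i) := by
    intro i
    refine LipschitzWith.locallyLipschitz (K := 1) ?_
    refine LipschitzWith.of_dist_le_mul fun a b' => ?_
    simpa using dist_le_pi_dist a b' i
  have hext : ∀ j : ℤ, LocallyLipschitz (fun x : Fin N → ℝ => extComp N x j) := by
    intro j
    by_cases h : 0 < j ∧ j ≤ (N : ℤ)
    · have he : (fun x : Fin N → ℝ => extComp N x j)
          = fun x : Fin N → ℝ => x ⟨(j - 1).toNat, by omega⟩ := by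
        funext x; rw [extComp, dif_pos h]
      rw [he]; exact hcoord _
    · have he : (fun x : Fin N → ℝ => extComp N x j)
          = fun _ : Fin N → ℝ => if j = 0 then (1:ℝ) else 0 := by
        funext x; rw [extComp, dif_neg h]
      rw [he]; exact LocallyLipschitz.const _
  simp only [momentRHS]
  exact ((myLL.fun_mul ((myLL.fun_mul (LocallyLipschitz.const _) hβl).add
        (myLL.fun_mul (LocallyLipschitz.const _) hΓl)) (hcoord k)).add
      (myLL.fun_mul ((myLL.fun_mul (LocallyLipschitz.const _) hbl).add
        (myLL.fun_mul (LocallyLipschitz.const _) hγl)) (hext _))).add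
    (myLL.fun_mul (myLL.fun_mul (LocallyLipschitz.const _) hcl) (hext _))

lemma myUniq (N : ℕ) (b β c γ Γ : (Fin N → ℝ) → ℝ)
    (hbl : LocallyLipschitz b) (hβl : LocallyLipschitz β) (hcl : LocallyLipschitz c)
    (hγl : LocallyLipschitz γ) (hΓl : LocallyLipschitz Γ)
    (T : ℝ) (hT : 0 ≤ T) (w₁ w₂ : ℝ → Fin N → ℝ)
    (h₁ : ∀ k : Fin N, ∀ t ∈ Icc (0:ℝ) T,
      HasDerivWithinAt (fun s => w₁ s k) (momentRHS N b β c γ Γ (w₁ t) k) (Icc (0:ℝ) T) t)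
    (h₂ : ∀ k : Fin N, ∀ t ∈ Icc (0:ℝ) T,
      HasDerivWithinAt (fun s => w₂ s k) (momentRHS N b β c γ Γ (w₂ t) k) (Icc (0:ℝ) T) t)
    (h0 : w₁ 0 = w₂ 0) :
    Set.EqOn w₁ w₂ (Icc (0:ℝ) T) := by
  set F : (Fin N → ℝ) → (Fin N → ℝ) := fun x k => momentRHS N b β c γ Γ x k with hFdef
  have h₁v : ∀ t ∈ Icc (0:ℝ) T, HasDerivWithinAt w₁ (F (w₁ t)) (Icc (0:ℝ) T) t :=
    fun t ht => hasDerivWithinAt_pi.2 fun k => h₁ k t ht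
  have h₂v : ∀ t ∈ Icc (0:ℝ) T, HasDerivWithinAt w₂ (F (w₂ t)) (Icc (0:ℝ) T) t :=
    fun t ht => hasDerivWithinAt_pi.2 fun k => h₂ k t ht
  have hc₁ : ContinuousOn w₁ (Icc (0:ℝ) T) := fun t ht => (h₁v t ht).continuousWithinAt
  have hc₂ : ContinuousOn w₂ (Icc (0:ℝ) T) := fun t ht => (h₂v t ht).continuousWithinAt
  obtain ⟨C₁, hC₁⟩ := isCompact_Icc.exists_bound_of_continuousOn hc₁
  obtain ⟨C₂, hC₂⟩ := isCompact_Icc.exists_bound_of_continuousOn hc₂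
  set ρ : ℝ := max C₁ C₂ with hρdef
  have hmem₁ : ∀ t ∈ Icc (0:ℝ) T, w₁ t ∈ Metric.closedBall (0 : Fin N → ℝ) ρ := fun t ht =>
    mem_closedBall_zero_iff.2 (le_trans (hC₁ t ht) (le_max_left _ _))
  have hmem₂ : ∀ t ∈ Icc (0:ℝ) T, w₂ t ∈ Metric.closedBall (0 : Fin N → ℝ) ρ := fun t ht =>
    mem_closedBall_zero_iff.2 (le_trans (hC₂ t ht) (le_max_right _ _))
  obtain ⟨L, hL⟩ := myLL.lipschitzOnWith_of_isCompact
    (myLL_F N b β c γ Γ hbl hβl hcl hγl hΓl)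
    (isCompact_closedBall (0 : Fin N → ℝ) ρ)
  have hderiv : ∀ (w : ℝ → Fin N → ℝ),
      (∀ t ∈ Icc (0:ℝ) T, HasDerivWithinAt w (F (w t)) (Icc (0:ℝ) T) t) →
      ∀ t ∈ Ico (0:ℝ) T, HasDerivWithinAt w (F (w t)) (Ici t) t := by
    intro w hw t ht
    have h1 : HasDerivWithinAt w (F (w t)) (Icc t T) t :=
      (hw t ⟨ht.1, ht.2.le⟩).mono (Icc_subset_Icc_left ht.1)
    refine h1.congr_set ?_
    filter_upwards [Iio_mem_nhds ht.2] with r hr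
    simp only [Set.mem_Icc, Set.mem_Ici, eq_iff_iff]
    exact ⟨fun h => h.1, fun h => ⟨h, hr.le⟩⟩
  exact ODE_solution_unique_of_mem_Icc_right
    (v := fun _ x => F x) (s := fun _ => Metric.closedBall (0 : Fin N → ℝ) ρ)
    (fun _ _ => hL) hc₁ (fun t ht => hderiv w₁ h₁v t ht)
    (fun t ht => hmem₁ t ⟨ht.1, ht.2.le⟩) hc₂ (fun t ht => hderiv w₂ h₂v t ht)
    (fun t ht => hmem₂ t ⟨ht.1, ht.2.le⟩) h0

lemma myExistsIcc (N : ℕ) (hN : 0 < N)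
    (b β c γ Γ : (Fin N → ℝ) → ℝ)
    (hbl : LocallyLipschitz b) (hβl : LocallyLipschitz β) (hcl : LocallyLipschitz c)
    (hγl : LocallyLipschitz γ) (hΓl : LocallyLipschitz Γ)
    (b₀ β₀ c₀ γ₀ Γ₀ : ℝ) (hb₀ : 0 ≤ b₀) (hβ₀ : 0 ≤ β₀) (hc₀ : 0 ≤ c₀)
    (hγ₀ : 0 ≤ γ₀) (hΓ₀ : 0 ≤ Γ₀)
    (f_c f_γ : ℝ → ℝ)
    (hfc_mono : MonotoneOn f_c (Set.Ici 0))
    (hfc_nonneg : ∀ s ∈ Set.Ici (0 : ℝ), 0 ≤ f_c s)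
    (hfγ_mono : MonotoneOn f_γ (Set.Ici 0))
    (hfγ_nonneg : ∀ s ∈ Set.Ici (0 : ℝ), 0 ≤ f_γ s)
    (hβb : ∀ x, |β x| ≤ β₀) (hΓb : ∀ x, |Γ x| ≤ Γ₀)
    (hbb : ∀ x : Fin N → ℝ, |b x| ≤ b₀ * (1 + |x ⟨0, hN⟩|))
    (hγb : ∀ x : Fin N → ℝ, |γ x| ≤ γ₀ * (1 + f_γ |x ⟨0, hN⟩| + normN N x))
    (hcb : ∀ x : Fin N → ℝ, |c x| ≤ c₀ * (1 + f_c |x ⟨0, hN⟩| + (normN N x) ^ 2))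
    (z₀ : Fin N → ℝ) (T₀ : ℝ) (hT₀ : 0 ≤ T₀) :
    ∃ w : ℝ → Fin N → ℝ, w 0 = z₀ ∧
      ∀ k : Fin N, ∀ t ∈ Icc (0:ℝ) T₀,
        HasDerivWithinAt (fun s => w s k) (momentRHS N b β c γ Γ (w t) k) (Icc (0:ℝ) T₀) t := by
  set F : (Fin N → ℝ) → (Fin N → ℝ) := fun x k => momentRHS N b β c γ Γ x k with hFdef
  have hFll : LocallyLipschitz F := myLL_F N b β c γ Γ hbl hβl hcl hγl hΓl
  obtain ⟨ρ, hρ0, hap⟩ := myApriori N hN b β c γ Γ b₀ β₀ c₀ γ₀ Γ₀ hb₀ hβ₀ hc₀ hγ₀ hΓ₀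
    f_c f_γ hfc_mono hfc_nonneg hfγ_mono hfγ_nonneg hβb hΓb hbb hγb hcb z₀ T₀ hT₀
  obtain ⟨L, hL⟩ := myLL.lipschitzOnWith_of_isCompact hFll
    (isCompact_closedBall (0 : Fin N → ℝ) (ρ + 1))
  obtain ⟨C, hC⟩ := (isCompact_closedBall (0 : Fin N → ℝ) (ρ + 1)).exists_bound_of_continuousOn
    hFll.continuous.continuousOn
  set C' : ℝ := max C 1 with hC'def
  have hC'1 : 1 ≤ C' := le_max_right _ _
  have hC'0 : 0 < C' := lt_of_lt_of_le one_pos hC'1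
  have hC' : ∀ x ∈ Metric.closedBall (0 : Fin N → ℝ) (ρ + 1), ‖F x‖ ≤ C' :=
    fun x hx => le_trans (hC x hx) (le_max_left _ _)
  set ε : ℝ := 1 / C' with hεdef
  have hε0 : 0 < ε := by positivity
  have hCε : C' * ε ≤ 1 := by
    rw [hεdef, mul_one_div, div_self (ne_of_gt hC'0)]
  -- main induction : solutions on [0, min T₀ (n ε)]
  have main : ∀ n : ℕ, ∃ w : ℝ → Fin N → ℝ, w 0 = z₀ ∧
      ∀ t ∈ Icc (0:ℝ) (min T₀ (n * ε)),
        HasDerivWithinAt w (F (w t)) (Icc (0:ℝ) (min T₀ (n * ε))) t := by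
    intro n
    induction n with
    | zero =>
      refine ⟨fun _ => z₀, rfl, ?_⟩
      intro t ht
      simp only [Nat.cast_zero, zero_mul, min_eq_right hT₀] at ht ⊢
      have h0 : t = 0 := le_antisymm ht.2 ht.1
      subst h0
      rw [Set.Icc_self]
      exact myHasDerivWithinAt_singleton _ _ _
    | succ n ih =>
      obtain ⟨w, hw0, hw⟩ := ih
      by_cases hc : T₀ ≤ n * ε
      · refine ⟨w, hw0, ?_⟩
        have e : min T₀ ((n + 1 : ℕ) * ε) = min T₀ ((n : ℕ) * ε) := by
          rw [min_eq_left hc, min_eq_left]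
          push_cast
          nlinarith only [hε0, hc]
        rw [e]
        exact hw
      · push_neg at hc
        set Tn : ℝ := min T₀ ((n : ℕ) * ε) with hTndef
        have hTn_eq : Tn = (n : ℕ) * ε := min_eq_right hc.le
        have hTn0 : 0 ≤ Tn := le_min hT₀ (by positivity)
        have hTnT₀ : Tn ≤ T₀ := min_le_left _ _
        -- componentwise solution for the a priori bound
        have hwcomp : ∀ k : Fin N, ∀ t ∈ Icc (0:ℝ) Tn,
            HasDerivWithinAt (fun s => w s k) (momentRHS N b β c γ Γ (w t) k)
              (Icc (0:ℝ) Tn) t :=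
          fun k t ht => hasDerivWithinAt_pi.1 (hw t ht) k
        have hbound := hap Tn hTn0 hTnT₀ w hw0 hwcomp
        have hwTn : ‖w Tn‖ ≤ ρ := by
          rw [pi_norm_le_iff_of_nonneg hρ0]
          intro k
          rw [Real.norm_eq_abs]
          exact hbound Tn ⟨hTn0, le_refl _⟩ k
        -- Picard–Lindelöf step
        have hsub : Metric.closedBall (w Tn) 1 ⊆ Metric.closedBall (0 : Fin N → ℝ) (ρ + 1) := by
          apply Metric.closedBall_subset_closedBall'
          rw [dist_zero_right]
          linarith
        have hpl : IsPicardLindelof (fun _ x => F x) (tmin := Tn) (tmax := Tn + ε)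
            ⟨Tn, le_refl _, by linarith⟩ (w Tn) 1 0 ⟨C', hC'0.le⟩ L :=
          { lipschitzOnWith := fun t _ => hL.mono (by simpa using hsub)
            continuousOn := fun x _ => continuousOn_const
            norm_le := fun t _ x hx => hC' x (hsub (by simpa using hx))
            mul_max_le := by
              simp only [NNReal.coe_mk, NNReal.coe_one, NNReal.coe_zero, sub_zero,
                add_sub_cancel_left, sub_self]
              rw [max_eq_left hε0.le]
              exact hCε }
        obtain ⟨u, hu0, hu⟩ : ∃ u : ℝ → Fin N → ℝ, u Tn = w Tn ∧ ∀ t ∈ Icc Tn (Tn + ε),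
            HasDerivWithinAt u (F (u t)) (Icc Tn (Tn + ε)) t :=
          hpl.exists_eq_forall_mem_Icc_hasDerivWithinAt₀
        -- glue
        set zz : ℝ → Fin N → ℝ := fun t => if t ≤ Tn then w t else u t with hzzdef
        have hEqw : Set.EqOn zz w (Icc (0:ℝ) Tn) := fun t ht => if_pos ht.2
        have hEqu : Set.EqOn zz u (Icc Tn (Tn + ε)) := by
          intro t ht
          by_cases h : t ≤ Tn
          · have he : t = Tn := le_antisymm h ht.1
            rw [he]
            show (if Tn ≤ Tn then w Tn else u Tn) = u Tn
            rw [if_pos le_rfl, hu0]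
          · simp only [hzzdef, if_neg h]
        have hglue : ∀ t ∈ Icc (0:ℝ) (Tn + ε),
            HasDerivWithinAt zz (F (zz t)) (Icc (0:ℝ) (Tn + ε)) t := by
          intro t ht
          rcases lt_trichotomy t Tn with hlt | heq | hgt
          · have htm : t ∈ Icc (0:ℝ) Tn := ⟨ht.1, hlt.le⟩
            have h1 : HasDerivWithinAt zz (F (zz t)) (Icc (0:ℝ) Tn) t := by
              rw [hEqw htm]
              exact (hw t htm).congr hEqw (hEqw htm)
            refine h1.congr_set ?_
            filter_upwards [Iio_mem_nhds hlt] with r hr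
            simp only [Set.mem_Icc, eq_iff_iff]
            refine ⟨fun h => ⟨h.1, ?_⟩, fun h => ⟨h.1, (Set.mem_Iio.1 hr).le⟩⟩
            have h2 := h.2
            have h3 := Set.mem_Iio.1 hr
            linarith
          · have htm : t ∈ Icc (0:ℝ) Tn := ⟨ht.1, heq.le⟩
            have htm' : t ∈ Icc Tn (Tn + ε) := ⟨heq.ge, by linarith [ht.2]⟩
            have h1 : HasDerivWithinAt zz (F (zz t)) (Icc (0:ℝ) Tn) t := by
              rw [hEqw htm]
              exact (hw t htm).congr hEqw (hEqw htm)
            have h2 : HasDerivWithinAt zz (F (zz t)) (Icc Tn (Tn + ε)) t := by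
              rw [hEqu htm']
              exact (hu t htm').congr hEqu (hEqu htm')
            have h3 := h1.union h2
            rwa [Set.Icc_union_Icc_eq_Icc hTn0 (by linarith)] at h3
          · have htm' : t ∈ Icc Tn (Tn + ε) := ⟨hgt.le, ht.2⟩
            have h2 : HasDerivWithinAt zz (F (zz t)) (Icc Tn (Tn + ε)) t := by
              rw [hEqu htm']
              exact (hu t htm').congr hEqu (hEqu htm')
            refine h2.congr_set ?_
            filter_upwards [Ioi_mem_nhds hgt] with r hr
            simp only [Set.mem_Icc, eq_iff_iff]
            refine ⟨fun h => ⟨?_, h.2⟩, fun h => ⟨(Set.mem_Ioi.1 hr).le, h.2⟩⟩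
            have h3 := Set.mem_Ioi.1 hr
            linarith
        -- restrict to [0, min T₀ ((n+1) ε)]
        have hTn1 : min T₀ ((n + 1 : ℕ) * ε) ≤ Tn + ε := by
          rw [hTn_eq]
          push_cast
          calc min T₀ (((n : ℝ) + 1) * ε) ≤ ((n : ℝ) + 1) * ε := min_le_right _ _
            _ = (n : ℝ) * ε + ε := by ring
        refine ⟨zz, ?_, ?_⟩
        · simp only [hzzdef, if_pos hTn0, hw0]
        · intro t ht
          have htm : t ∈ Icc (0:ℝ) (Tn + ε) := ⟨ht.1, le_trans ht.2 hTn1⟩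
          exact (hglue t htm).mono (Set.Icc_subset_Icc_right hTn1)
  -- conclude : choose n with T₀ ≤ n ε
  obtain ⟨n, hn⟩ := exists_nat_ge (T₀ / ε)
  have hn' : T₀ ≤ n * ε := by
    rw [div_le_iff₀ hε0] at hn
    exact hn
  obtain ⟨w, hw0, hw⟩ := main n
  rw [min_eq_left hn'] at hw
  exact ⟨w, hw0, fun k t ht => hasDerivWithinAt_pi.1 (hw t ht) k⟩

/-- Under Assumptions A (with local Lipschitz continuity and continuity of the
coefficient maps) the moment ODE system has a unique global solution on `[0,∞)` for every
initial value. -/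
theorem stmt_0 (N : ℕ) (hN : 0 < N)
    (b β c γ Γ : (Fin N → ℝ) → ℝ)
    (hbc : Continuous b) (hβc : Continuous β) (hcc : Continuous c)
    (hγc : Continuous γ) (hΓc : Continuous Γ)
    (hbl : LocallyLipschitz b) (hβl : LocallyLipschitz β) (hcl : LocallyLipschitz c)
    (hγl : LocallyLipschitz γ) (hΓl : LocallyLipschitz Γ)
    -- Assumptions A:
    (b₀ β₀ c₀ γ₀ Γ₀ : ℝ) (hb₀ : 0 ≤ b₀) (hβ₀ : 0 ≤ β₀) (hc₀ : 0 ≤ c₀)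
    (hγ₀ : 0 ≤ γ₀) (hΓ₀ : 0 ≤ Γ₀)
    (f_c f_γ : ℝ → ℝ)
    (hfc_cont : ContinuousOn f_c (Set.Ici 0)) (hfc_mono : MonotoneOn f_c (Set.Ici 0))
    (hfc_nonneg : ∀ s ∈ Set.Ici (0 : ℝ), 0 ≤ f_c s)
    (hfγ_cont : ContinuousOn f_γ (Set.Ici 0)) (hfγ_mono : MonotoneOn f_γ (Set.Ici 0))
    (hfγ_nonneg : ∀ s ∈ Set.Ici (0 : ℝ), 0 ≤ f_γ s)
    (hβb : ∀ x, |β x| ≤ β₀) (hΓb : ∀ x, |Γ x| ≤ Γ₀)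
    (hbb : ∀ x : Fin N → ℝ, |b x| ≤ b₀ * (1 + |x ⟨0, hN⟩|))
    (hγb : ∀ x : Fin N → ℝ, |γ x| ≤ γ₀ * (1 + f_γ |x ⟨0, hN⟩| + normN N x))
    (hcb : ∀ x : Fin N → ℝ, |c x| ≤ c₀ * (1 + f_c |x ⟨0, hN⟩| + (normN N x) ^ 2))
    (z₀ : Fin N → ℝ) :
    ∃ z : ℝ → Fin N → ℝ,
      (z 0 = z₀ ∧ IsMomentSol N b β c γ Γ (Set.Ici 0) z) ∧
      ∀ w : ℝ → Fin N → ℝ, w 0 = z₀ → IsMomentSol N b β c γ Γ (Set.Ici 0) w →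
        ∀ t ∈ Set.Ici (0 : ℝ), w t = z t := by
  classical
  have hex : ∀ n : ℕ, ∃ w : ℝ → Fin N → ℝ, w 0 = z₀ ∧
      ∀ k : Fin N, ∀ t ∈ Icc (0:ℝ) (n:ℝ),
        HasDerivWithinAt (fun s => w s k) (momentRHS N b β c γ Γ (w t) k) (Icc (0:ℝ) (n:ℝ)) t :=
    fun n => myExistsIcc N hN b β c γ Γ hbl hβl hcl hγl hΓl b₀ β₀ c₀ γ₀ Γ₀ hb₀ hβ₀ hc₀ hγ₀ hΓ₀
      f_c f_γ hfc_mono hfc_nonneg hfγ_mono hfγ_nonneg hβb hΓb hbb hγb hcb z₀ n (Nat.cast_nonneg n)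
  choose W hW0 hWs using hex
  have hres : ∀ (T T' : ℝ), 0 ≤ T' → T' ≤ T → ∀ w : ℝ → Fin N → ℝ,
      (∀ k : Fin N, ∀ t ∈ Icc (0:ℝ) T,
        HasDerivWithinAt (fun s => w s k) (momentRHS N b β c γ Γ (w t) k) (Icc (0:ℝ) T) t) →
      ∀ k : Fin N, ∀ t ∈ Icc (0:ℝ) T',
        HasDerivWithinAt (fun s => w s k) (momentRHS N b β c γ Γ (w t) k) (Icc (0:ℝ) T') t :=
    fun T T' _ hTT w hres k t ht =>
      (hres k t ⟨ht.1, le_trans ht.2 hTT⟩).mono (Set.Icc_subset_Icc_right hTT)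
  have hagree : ∀ (n₁ n₂ : ℕ), ∀ t ∈ Icc (0:ℝ) (min (n₁:ℝ) (n₂:ℝ)), W n₁ t = W n₂ t := by
    intro n₁ n₂ t ht
    have hT0 : (0:ℝ) ≤ min (n₁:ℝ) (n₂:ℝ) := le_min (Nat.cast_nonneg _) (Nat.cast_nonneg _)
    exact myUniq N b β c γ Γ hbl hβl hcl hγl hΓl (min (n₁:ℝ) (n₂:ℝ)) hT0 (W n₁) (W n₂)
      (hres _ _ hT0 (min_le_left _ _) _ (hWs n₁))
      (hres _ _ hT0 (min_le_right _ _) _ (hWs n₂))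
      ((hW0 n₁).trans (hW0 n₂).symm) ht
  set z : ℝ → Fin N → ℝ := fun t => W (⌊t⌋₊ + 1) t with hzdef
  have hzeq : ∀ (n : ℕ), ∀ t ∈ Icc (0:ℝ) (n:ℝ), z t = W n t := by
    intro n t ht
    have h1 : t < ((⌊t⌋₊ + 1 : ℕ) : ℝ) := by
      push_cast
      exact Nat.lt_floor_add_one t
    exact hagree (⌊t⌋₊ + 1) n t ⟨ht.1, le_min h1.le ht.2⟩
  have hz0 : z 0 = z₀ := by
    have : z 0 = W (⌊(0:ℝ)⌋₊ + 1) 0 := rfl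
    rw [this, hW0]
  have hzsol : IsMomentSol N b β c γ Γ (Set.Ici 0) z := by
    intro k t ht
    rw [Set.mem_Ici] at ht
    set n : ℕ := ⌊t⌋₊ + 1 with hndef
    have htn : t < (n:ℝ) := by
      simp only [hndef]
      push_cast
      exact Nat.lt_floor_add_one t
    have htmem : t ∈ Icc (0:ℝ) (n:ℝ) := ⟨ht, htn.le⟩
    have hEq : Set.EqOn (fun s => z s k) (fun s => W n s k) (Icc (0:ℝ) (n:ℝ)) := by
      intro s hs
      show z s k = W n s k
      rw [hzeq n s hs]
    have h2 : HasDerivWithinAt (fun s => z s k) (momentRHS N b β c γ Γ (z t) k)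
        (Icc (0:ℝ) (n:ℝ)) t := by
      rw [hzeq n t htmem]
      exact (hWs n k t htmem).congr hEq (hEq htmem)
    refine h2.congr_set ?_
    filter_upwards [Iio_mem_nhds htn] with r hr
    simp only [Set.mem_Icc, Set.mem_Ici, eq_iff_iff]
    exact ⟨fun h => h.1, fun h => ⟨h, (Set.mem_Iio.1 hr).le⟩⟩
  refine ⟨z, ⟨hz0, hzsol⟩, ?_⟩
  intro w hw0 hwsol t ht
  rw [Set.mem_Ici] at ht
  have hsubIci : Icc (0:ℝ) t ⊆ Set.Ici 0 := fun r hr => hr.1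
  have h1 : ∀ k : Fin N, ∀ s ∈ Icc (0:ℝ) t,
      HasDerivWithinAt (fun r => w r k) (momentRHS N b β c γ Γ (w s) k) (Icc (0:ℝ) t) s :=
    fun k s hs => (hwsol k s hs.1).mono hsubIci
  have h2 : ∀ k : Fin N, ∀ s ∈ Icc (0:ℝ) t,
      HasDerivWithinAt (fun r => z r k) (momentRHS N b β c γ Γ (z s) k) (Icc (0:ℝ) t) s :=
    fun k s hs => (hzsol k s hs.1).mono hsubIci
  exact myUniq N b β c γ Γ hbl hβl hcl hγl hΓl t ht w z h1 h2
    (hw0.trans hz0.symm) ⟨ht, le_refl t⟩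
end

section
/- (Positive maximum principle on ℝ_{≥0}.) Let B, Σ : [0,∞) × ℝ → ℝ be continuous with Σ(t,0) = 0 and B(t,0) ≥ 0 for all t ≥ 0, let τ : [0,∞) → ℝ be continuously differentiable with compact support, and let f : ℝ → ℝ be twice continuously differentiable with compact support. Suppose (t₀, x₀) ∈ [0,∞) × [0,∞) satisfies τ(t₀)·f(x₀) = sup_{(t,x) ∈ [0,∞)×[0,∞)} τ(t)·f(x). Then τ(t₀)·( B(t₀,x₀)·f'(x₀) + (1/2)·Σ(t₀,x₀)²·f''(x₀) ) + τ'(t₀)·f(x₀) ≤ 0, where τ'(0) denotes the right-hand derivative of τ at 0 and f'(0), f''(0) denote right-hand derivatives at 0 (equivalently, two-sided derivatives of f on ℝ). -/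
open Set Filter

/-- Fermat at the left endpoint: if `g` has a one-sided derivative at `0` within `[0,∞)` and is
maximized at `0` over `[0,∞)`, then this derivative is nonpositive. -/
lemma aux_boundary_deriv_nonpos {g : ℝ → ℝ} {g' : ℝ}
    (hg : HasDerivWithinAt g g' (Set.Ici 0) 0)
    (hm : ∀ x ∈ Set.Ici (0 : ℝ), g x ≤ g 0) : g' ≤ 0 := by
  have hy : (1 : ℝ) ∈ posTangentConeAt (Set.Ici (0:ℝ)) 0 := by
    apply mem_posTangentConeAt_of_segment_subset
    rw [segment_eq_Icc (by norm_num : (0:ℝ) ≤ 0 + 1)]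
    exact fun x hx => hx.1
  have hlm : IsLocalMaxOn g (Set.Ici (0:ℝ)) 0 :=
    eventually_nhdsWithin_of_forall hm
  simpa using hlm.hasFDerivWithinAt_nonpos hg.hasFDerivWithinAt hy

/-- Second derivative is nonpositive at an interior local maximum of a `C²` function. -/
lemma aux_deriv2_nonpos {g : ℝ → ℝ} (hg : ContDiff ℝ 2 g) {a : ℝ}
    (h : IsLocalMax g a) : deriv (deriv g) a ≤ 0 := by
  by_contra hpos
  push_neg at hpos
  have hf1 : ContDiff ℝ 1 (deriv g) := by
    have h2 : ContDiff ℝ (1 + 1 : WithTop ℕ∞) g := by norm_num; exact hg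
    exact (contDiff_succ_iff_deriv.mp h2).2.2
  have hdg : Differentiable ℝ (deriv g) := (contDiff_one_iff_deriv.mp hf1).1
  have hcdd : Continuous (deriv (deriv g)) := (contDiff_one_iff_deriv.mp hf1).2
  have hda : deriv g a = 0 := h.deriv_eq_zero
  have hev : ∀ᶠ x in nhds a, 0 < deriv (deriv g) x ∧ g x ≤ g a :=
    (hcdd.continuousAt.eventually (eventually_gt_nhds hpos)).and h
  rcases Metric.eventually_nhds_iff.mp hev with ⟨ε, hε, hP⟩
  set b : ℝ := a + ε / 2 with hb
  have hab : a < b := by simp [hb]; positivity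
  have hball : ∀ x ∈ Set.Icc a b, dist x a < ε := by
    intro x hx
    have hx2 : x ≤ a + ε / 2 := by rw [← hb]; exact hx.2
    rw [Real.dist_eq, abs_lt]
    constructor <;> linarith [hx.1]
  have mono1 : StrictMonoOn (deriv g) (Set.Icc a b) := by
    apply strictMonoOn_of_deriv_pos (convex_Icc a b) hdg.continuous.continuousOn
    intro x hx
    rw [interior_Icc] at hx
    exact (hP (hball x ⟨hx.1.le, hx.2.le⟩)).1
  have pos : ∀ x ∈ interior (Set.Icc a b), 0 < deriv g x := by
    rw [interior_Icc]
    intro x hx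
    have := mono1 (Set.left_mem_Icc.mpr hab.le) ⟨hx.1.le, hx.2.le⟩ hx.1
    rwa [hda] at this
  have mono2 : StrictMonoOn g (Set.Icc a b) :=
    strictMonoOn_of_deriv_pos (convex_Icc a b) hg.continuous.continuousOn pos
  have hlt : g a < g b :=
    mono2 (Set.left_mem_Icc.mpr hab.le) (Set.right_mem_Icc.mpr hab.le) hab
  have hle : g b ≤ g a := (hP (hball b (Set.right_mem_Icc.mpr hab.le))).2
  linarith

/-- Positive maximum principle on the state space `ℝ_{≥0}`: under the boundary
conditions `Σ(t,0) = 0` and `B(t,0) ≥ 0`, if `τ·f` attains its supremum over `[0,∞) × [0,∞)` at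
`(t₀, x₀)`, then the time-extended generator applied to `τ·f` at `(t₀,x₀)` is nonpositive.
Here `τ'` is the (right-hand at `0`) derivative of `τ` on `[0,∞)`, and `f'`, `f''` are the
(two-sided) derivatives of the `C²` function `f` on `ℝ`. -/
theorem stmt_4 (B Sg : ℝ → ℝ → ℝ)
    (hB : ContinuousOn (fun p : ℝ × ℝ => B p.1 p.2) (Set.Ici 0 ×ˢ Set.univ))
    (hSg : ContinuousOn (fun p : ℝ × ℝ => Sg p.1 p.2) (Set.Ici 0 ×ˢ Set.univ))
    (hSg0 : ∀ t ∈ Set.Ici (0 : ℝ), Sg t 0 = 0)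
    (hB0 : ∀ t ∈ Set.Ici (0 : ℝ), 0 ≤ B t 0)
    (τ τ' : ℝ → ℝ)
    (hτderiv : ∀ t ∈ Set.Ici (0 : ℝ), HasDerivWithinAt τ (τ' t) (Set.Ici 0) t)
    (hτ'cont : ContinuousOn τ' (Set.Ici 0))
    (hτsupp : ∃ K : Set ℝ, IsCompact K ∧ ∀ t ∈ Set.Ici (0 : ℝ), t ∉ K → τ t = 0)
    (f : ℝ → ℝ) (hf : ContDiff ℝ 2 f) (hfsupp : HasCompactSupport f)
    (t₀ x₀ : ℝ) (ht₀ : t₀ ∈ Set.Ici (0 : ℝ)) (hx₀ : x₀ ∈ Set.Ici (0 : ℝ))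
    (hmax : ∀ t ∈ Set.Ici (0 : ℝ), ∀ x ∈ Set.Ici (0 : ℝ), τ t * f x ≤ τ t₀ * f x₀) :
    τ t₀ * (B t₀ x₀ * deriv f x₀ + (1 / 2) * (Sg t₀ x₀) ^ 2 * deriv (deriv f) x₀)
      + τ' t₀ * f x₀ ≤ 0 := by
  -- time part
  have key1 : τ' t₀ * f x₀ ≤ 0 := by
    have hd : HasDerivWithinAt (fun t => τ t * f x₀) (τ' t₀ * f x₀) (Set.Ici 0) t₀ :=
      (hτderiv t₀ ht₀).mul_const (f x₀)
    have hm : ∀ t ∈ Set.Ici (0:ℝ), τ t * f x₀ ≤ τ t₀ * f x₀ := fun t ht => hmax t ht x₀ hx₀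
    rcases eq_or_lt_of_le (Set.mem_Ici.mp ht₀) with h0 | h0
    · have h0' : t₀ = 0 := h0.symm
      subst h0'
      exact aux_boundary_deriv_nonpos hd hm
    · have hn : Set.Ici (0:ℝ) ∈ nhds t₀ := Ici_mem_nhds h0
      have hda := hd.hasDerivAt hn
      have hlm : IsLocalMax (fun t => τ t * f x₀) t₀ :=
        Filter.eventually_of_mem hn (fun t ht => hm t ht)
      rw [hlm.hasDerivAt_eq_zero hda]
  -- space part
  have key2 : τ t₀ * (B t₀ x₀ * deriv f x₀ + (1 / 2) * (Sg t₀ x₀) ^ 2 * deriv (deriv f) x₀)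
      ≤ 0 := by
    set g : ℝ → ℝ := fun x => τ t₀ * f x with hgdef
    have hg2 : ContDiff ℝ 2 g := contDiff_const.mul hf
    have hgd : deriv g = fun x => τ t₀ * deriv f x :=
      funext fun x => deriv_const_mul_field _
    have hm : ∀ x ∈ Set.Ici (0:ℝ), g x ≤ g x₀ := fun x hx => hmax t₀ ht₀ x hx
    rcases eq_or_lt_of_le (Set.mem_Ici.mp hx₀) with h0 | h0
    · -- boundary case x₀ = 0
      have h0' : x₀ = 0 := h0.symm
      subst h0'
      have hSg' : Sg t₀ 0 = 0 := hSg0 t₀ ht₀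
      have hBpos : 0 ≤ B t₀ 0 := hB0 t₀ ht₀
      have hdg : HasDerivWithinAt g (τ t₀ * deriv f 0) (Set.Ici 0) 0 := by
        have : HasDerivAt g (τ t₀ * deriv f 0) 0 := by
          have hfd : HasDerivAt f (deriv f 0) 0 :=
            (hf.differentiable (by norm_num) 0).hasDerivAt
          simpa [hgdef] using hfd.const_mul (τ t₀)
        exact this.hasDerivWithinAt
      have h1 : τ t₀ * deriv f 0 ≤ 0 := aux_boundary_deriv_nonpos hdg hm
      rw [hSg']
      nlinarith
    · -- interior case x₀ > 0
      have hn : Set.Ici (0:ℝ) ∈ nhds x₀ := Ici_mem_nhds h0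
      have hlm : IsLocalMax g x₀ := Filter.eventually_of_mem hn (fun x hx => hm x hx)
      have h1 : τ t₀ * deriv f x₀ = 0 := by
        have := hlm.deriv_eq_zero
        rwa [hgd] at this
      have h2 : τ t₀ * deriv (deriv f) x₀ ≤ 0 := by
        have := aux_deriv2_nonpos hg2 hlm
        rw [hgd] at this
        rwa [deriv_const_mul_field] at this
      have e1 : B t₀ x₀ * (τ t₀ * deriv f x₀) = 0 := by rw [h1]; ring
      have e2 : Sg t₀ x₀ ^ 2 * (τ t₀ * deriv (deriv f) x₀) ≤ 0 :=
        mul_nonpos_of_nonneg_of_nonpos (sq_nonneg _) h2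
      nlinarith [e1, e2]
  linarith
end

section
/- (Positive maximum principle on [0,1].) Let B, Σ : [0,∞) × ℝ → ℝ be continuous with Σ(t,0) = Σ(t,1) = 0, B(t,0) ≥ 0 and B(t,1) ≤ 0 for all t ≥ 0, let τ : [0,∞) → ℝ be continuously differentiable with compact support, and let f : ℝ → ℝ be twice continuously differentiable. Suppose (t₀, x₀) ∈ [0,∞) × [0,1] satisfies τ(t₀)·f(x₀) = sup_{(t,x) ∈ [0,∞)×[0,1]} τ(t)·f(x). Then τ(t₀)·( B(t₀,x₀)·f'(x₀) + (1/2)·Σ(t₀,x₀)²·f''(x₀) ) + τ'(t₀)·f(x₀) ≤ 0, where τ'(0) denotes the right-hand derivative of τ at 0. -/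
open Set Filter Topology

/-- One-sided Fermat: at a max on `s`, the derivative within `s` paired with a direction
in the positive tangent cone is nonpositive. -/
lemma dir_nonpos {g : ℝ → ℝ} {g' a y : ℝ} {s : Set ℝ}
    (hmax : IsMaxOn g s a) (hg : HasDerivWithinAt g g' s a)
    (hy : y ∈ posTangentConeAt s a) : y * g' ≤ 0 := by
  have h := hmax.localize.hasFDerivWithinAt_nonpos hg.hasFDerivWithinAt hy
  simpa [smul_eq_mul] using h

/-- Positive maximum principle on the state space `[0,1]`: under the boundary
conditions `Σ(t,0) = Σ(t,1) = 0`, `B(t,0) ≥ 0` and `B(t,1) ≤ 0`, if `τ·f` attains its supremum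
over `[0,∞) × [0,1]` at `(t₀, x₀)`, then the time-extended generator applied to `τ·f` at
`(t₀,x₀)` is nonpositive.  Here `τ'` is the (right-hand at `0`) derivative of `τ` on `[0,∞)`. -/
theorem stmt_5 (B Sg : ℝ → ℝ → ℝ)
    (hB : ContinuousOn (fun p : ℝ × ℝ => B p.1 p.2) (Set.Ici 0 ×ˢ Set.univ))
    (hSg : ContinuousOn (fun p : ℝ × ℝ => Sg p.1 p.2) (Set.Ici 0 ×ˢ Set.univ))
    (hSg0 : ∀ t ∈ Set.Ici (0 : ℝ), Sg t 0 = 0)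
    (hSg1 : ∀ t ∈ Set.Ici (0 : ℝ), Sg t 1 = 0)
    (hB0 : ∀ t ∈ Set.Ici (0 : ℝ), 0 ≤ B t 0)
    (hB1 : ∀ t ∈ Set.Ici (0 : ℝ), B t 1 ≤ 0)
    (τ τ' : ℝ → ℝ)
    (hτderiv : ∀ t ∈ Set.Ici (0 : ℝ), HasDerivWithinAt τ (τ' t) (Set.Ici 0) t)
    (hτ'cont : ContinuousOn τ' (Set.Ici 0))
    (hτsupp : ∃ K : Set ℝ, IsCompact K ∧ ∀ t ∈ Set.Ici (0 : ℝ), t ∉ K → τ t = 0)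
    (f : ℝ → ℝ) (hf : ContDiff ℝ 2 f)
    (t₀ x₀ : ℝ) (ht₀ : t₀ ∈ Set.Ici (0 : ℝ)) (hx₀ : x₀ ∈ Set.Icc (0 : ℝ) 1)
    (hmax : ∀ t ∈ Set.Ici (0 : ℝ), ∀ x ∈ Set.Icc (0 : ℝ) 1, τ t * f x ≤ τ t₀ * f x₀) :
    τ t₀ * (B t₀ x₀ * deriv f x₀ + (1 / 2) * (Sg t₀ x₀) ^ 2 * deriv (deriv f) x₀)
      + τ' t₀ * f x₀ ≤ 0 := by
  have hfd : Differentiable ℝ f := hf.differentiable (by norm_num)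
  have hf' : ContDiff ℝ 1 (deriv f) := by
    have h2 : ContDiff ℝ ((1 : ℕ) + 1) f := by exact_mod_cast hf
    exact (contDiff_succ_iff_deriv.mp h2).2.2
  have hfd' : Differentiable ℝ (deriv f) := hf'.differentiable (by norm_num)
  set c := τ t₀ with hc
  -- time part
  have hT : τ' t₀ * f x₀ ≤ 0 := by
    have hmaxT : IsMaxOn (fun t => τ t * f x₀) (Set.Ici 0) t₀ :=
      fun t ht => hmax t ht x₀ hx₀
    have hder : HasDerivWithinAt (fun t => τ t * f x₀) (τ' t₀ * f x₀) (Set.Ici 0) t₀ :=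
      (hτderiv t₀ ht₀).mul_const (f x₀)
    have h1 : (1 : ℝ) ∈ posTangentConeAt (Set.Ici 0) t₀ := by
      apply mem_posTangentConeAt_of_segment_subset
      have : segment ℝ t₀ (t₀ + 1) = Set.Icc t₀ (t₀ + 1) :=
        segment_eq_Icc (by linarith)
      rw [this]
      intro z hz
      have := hz.1
      have : (0:ℝ) ≤ t₀ := ht₀
      exact le_trans this hz.1
    have := dir_nonpos hmaxT hder h1
    linarith
  -- spatial max
  have hmaxX : IsMaxOn (fun x => c * f x) (Set.Icc 0 1) x₀ :=
    fun x hx => hmax t₀ ht₀ x hx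
  have hderX : HasDerivWithinAt (fun x => c * f x) (c * deriv f x₀) (Set.Icc 0 1) x₀ :=
    (((hfd x₀).hasDerivAt).const_mul c).hasDerivWithinAt
  rcases eq_or_lt_of_le hx₀.1 with h0 | h0
  · -- x₀ = 0
    have hx0 : x₀ = 0 := h0.symm
    subst hx0
    have h1 : (1 : ℝ) ∈ posTangentConeAt (Set.Icc 0 1) 0 := by
      apply mem_posTangentConeAt_of_segment_subset
      have : segment ℝ (0:ℝ) (0 + 1) = Set.Icc (0:ℝ) 1 := by
        rw [segment_eq_Icc (by norm_num)]; norm_num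
      rw [this]
    have hd1 : c * deriv f 0 ≤ 0 := by
      have := dir_nonpos hmaxX hderX h1; linarith
    have hSg' : Sg t₀ 0 = 0 := hSg0 t₀ ht₀
    have hB' : 0 ≤ B t₀ 0 := hB0 t₀ ht₀
    rw [hSg']
    nlinarith [mul_nonpos_of_nonneg_of_nonpos hB' hd1]
  rcases eq_or_lt_of_le hx₀.2 with h1 | h1
  · -- x₀ = 1
    subst h1
    have hm1 : (-1 : ℝ) ∈ posTangentConeAt (Set.Icc 0 1) 1 := by
      apply mem_posTangentConeAt_of_segment_subset
      have : segment ℝ (1:ℝ) (1 + -1) = Set.Icc (0:ℝ) 1 := by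
        rw [show (1:ℝ) + -1 = 0 by norm_num, segment_symm, segment_eq_Icc (by norm_num)]
      rw [this]
    have hd1 : 0 ≤ c * deriv f 1 := by
      have := dir_nonpos hmaxX hderX hm1; linarith
    have hSg' : Sg t₀ 1 = 0 := hSg1 t₀ ht₀
    have hB' : B t₀ 1 ≤ 0 := hB1 t₀ ht₀
    rw [hSg']
    nlinarith [mul_nonpos_of_nonpos_of_nonneg hB' hd1]
  · -- 0 < x₀ < 1 : interior
    have hnhds : Set.Icc (0:ℝ) 1 ∈ 𝓝 x₀ := Icc_mem_nhds h0 h1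
    have hloc : IsLocalMax (fun x => c * f x) x₀ := hmaxX.isLocalMax hnhds
    have hd1 : c * deriv f x₀ = 0 :=
      hloc.hasDerivAt_eq_zero (((hfd x₀).hasDerivAt).const_mul c)
    -- second derivative nonpositive
    have hd2 : c * deriv (deriv f) x₀ ≤ 0 := by
      by_contra hpos
      push_neg at hpos
      set g' : ℝ → ℝ := fun x => c * deriv f x with hg'
      have hder2 : HasDerivAt g' (c * deriv (deriv f) x₀) x₀ :=
        ((hfd' x₀).hasDerivAt).const_mul c
      have hslope : Tendsto (slope g' x₀) (𝓝[≠] x₀) (𝓝 (c * deriv (deriv f) x₀)) :=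
        hasDerivAt_iff_tendsto_slope.mp hder2
      have hev : ∀ᶠ x in 𝓝[>] x₀, 0 < g' x := by
        have h1' : ∀ᶠ x in 𝓝[≠] x₀, 0 < slope g' x₀ x :=
          hslope.eventually (eventually_gt_nhds hpos)
        have h2' : ∀ᶠ x in 𝓝[>] x₀, 0 < slope g' x₀ x :=
          h1'.filter_mono (nhdsWithin_mono _ (fun z hz => ne_of_gt hz))
        filter_upwards [h2', self_mem_nhdsWithin] with x hx hx'
        have hxg : 0 < x - x₀ := sub_pos.mpr hx'
        have hg0 : g' x₀ = 0 := hd1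
        have heq : slope g' x₀ x = g' x / (x - x₀) := by
          rw [slope_def_field, hg0, sub_zero]
        rw [heq] at hx
        exact (div_pos_iff.mp hx).resolve_right (fun h => absurd hxg (by linarith [h.2])) |>.1
      rcases mem_nhdsGT_iff_exists_Ioo_subset.mp hev with ⟨u, hu, hIoo⟩
      have hu' : x₀ < min u 1 := lt_min hu h1
      set b := (x₀ + min u 1) / 2 with hb
      have hx₀b : x₀ < b := by simp only [hb]; linarith
      have hbu : b < u := by
        have : b < min u 1 := by simp only [hb]; linarith
        exact lt_of_lt_of_le this (min_le_left _ _)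
      have hb1 : b < 1 := by
        have : b < min u 1 := by simp only [hb]; linarith
        exact lt_of_lt_of_le this (min_le_right _ _)
      have hmono : StrictMonoOn (fun x => c * f x) (Set.Icc x₀ b) := by
        apply strictMonoOn_of_deriv_pos (convex_Icc _ _)
        · exact (hf.continuous.const_smul c).continuousOn
        · intro x hx
          rw [interior_Icc] at hx
          have hder : deriv (fun x => c * f x) x = c * deriv f x := by
            simp [deriv_const_mul c (hfd x)]
          rw [hder]
          exact hIoo ⟨hx.1, lt_trans hx.2 hbu⟩
      have hlt : c * f x₀ < c * f b :=
        hmono (Set.left_mem_Icc.mpr hx₀b.le) (Set.right_mem_Icc.mpr hx₀b.le) hx₀b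
      have : c * f b ≤ c * f x₀ := hmaxX ⟨by linarith [hx₀.1], hb1.le⟩
      linarith
    have hsq : (0:ℝ) ≤ 1 / 2 * (Sg t₀ x₀) ^ 2 := by positivity
    have e1 : c * (B t₀ x₀ * deriv f x₀) = 0 := by
      have h : c * (B t₀ x₀ * deriv f x₀) = B t₀ x₀ * (c * deriv f x₀) := by ring
      rw [h, hd1, mul_zero]
    have e2 : c * (1 / 2 * (Sg t₀ x₀) ^ 2 * deriv (deriv f) x₀) ≤ 0 := by
      have h : c * (1 / 2 * (Sg t₀ x₀) ^ 2 * deriv (deriv f) x₀)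
          = 1 / 2 * (Sg t₀ x₀) ^ 2 * (c * deriv (deriv f) x₀) := by ring
      rw [h]
      exact mul_nonpos_of_nonneg_of_nonpos hsq hd2
    nlinarith [e1, e2, hT]
end

section
/- (Multidimensional positive maximum principle.) Let d, m ≥ 1, let S = S^(1) × … × S^(d) ⊆ ℝ^d where each factor S^(i) is either ℝ or [0,∞). Let B : ℝ^d → ℝ^d and Σ : ℝ^d → ℝ^{d×m} be maps, let f : ℝ^d → ℝ be twice continuously differentiable with compact support, and define the generator (Hf)(x) := ∑_{i=1}^d B(x)_i ∂_i f(x) + (1/2) ∑_{i,j=1}^d (Σ(x)Σ(x)ᵀ)_{ij} ∂_i∂_j f(x). Suppose x₀ ∈ S satisfies f(x₀) = sup_{x ∈ S} f(x), and let I(x₀) := { i ∈ {1,…,d} : (x₀)_i = 0 and S^(i) = [0,∞) }. If for every i ∈ I(x₀) one has B(x₀)_i ≥ 0 and (Σ(x₀)Σ(x₀)ᵀ)_{ij} = 0 for all j ∈ {1,…,d}, then (Hf)(x₀) ≤ 0. -/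
open Matrix Filter

/-- Second derivative test (necessary direction): if `g` has a local max at `0` and a second
derivative `q` there, then `q ≤ 0`. -/
lemma aux_sd_test {g g' : ℝ → ℝ} {q : ℝ} (hg : ∀ t, HasDerivAt g (g' t) t)
    (hg' : HasDerivAt g' q 0) (hmax : IsLocalMax g 0) : q ≤ 0 := by
  by_contra hq
  push_neg at hq
  have h0 : g' 0 = 0 := by
    have h := hmax.deriv_eq_zero
    rwa [(hg 0).deriv] at h
  have hslope : Tendsto (slope g' 0) (nhdsWithin 0 {(0:ℝ)}ᶜ) (nhds q) :=
    hasDerivAt_iff_tendsto_slope.mp hg'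
  have hev : ∀ᶠ t in nhdsWithin (0:ℝ) {(0:ℝ)}ᶜ, 0 < slope g' 0 t :=
    hslope.eventually (eventually_gt_nhds hq)
  rw [eventually_nhdsWithin_iff] at hev
  rw [Metric.eventually_nhds_iff] at hev
  obtain ⟨ε, hε, hball⟩ := hev
  have hmax' := hmax
  rw [IsLocalMax, IsMaxFilter, Metric.eventually_nhds_iff] at hmax'
  obtain ⟨δ, hδ, hballδ⟩ := hmax'
  set c := min ε δ / 2 with hc
  have hc0 : 0 < c := by positivity
  have hcε : c < ε := by
    have : min ε δ ≤ ε := min_le_left _ _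
    simp only [hc]; linarith
  have hcδ : c < δ := by
    have : min ε δ ≤ δ := min_le_right _ _
    simp only [hc]; linarith
  have hg'pos : ∀ x ∈ Set.Ioo (0:ℝ) c, 0 < g' x := by
    intro x hx
    have hx0 : 0 < x := hx.1
    have hxε : dist x 0 < ε := by
      rw [Real.dist_eq, sub_zero, abs_of_pos hx0]; linarith [hx.2]
    have := hball hxε (by simp [ne_of_gt hx0])
    rw [slope_def_field, h0, sub_zero, sub_zero] at this
    exact (div_pos_iff.mp this).elim (fun h => h.1) (fun h => absurd h.2 (not_lt.mpr hx0.le))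
  have hcont : Continuous g :=
    continuous_iff_continuousAt.mpr fun t => (hg t).differentiableAt.continuousAt
  have hmono : StrictMonoOn g (Set.Icc 0 c) := by
    apply strictMonoOn_of_deriv_pos (convex_Icc _ _) hcont.continuousOn
    intro x hx
    rw [interior_Icc] at hx
    rw [(hg x).deriv]
    exact hg'pos x hx
  have h1 : g 0 < g c :=
    hmono (Set.left_mem_Icc.mpr hc0.le) (Set.right_mem_Icc.mpr hc0.le) hc0
  have h2 : g c ≤ g 0 := hballδ (by rw [Real.dist_eq, sub_zero, abs_of_pos hc0]; exact hcδ)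
  linarith

/-- Decomposition of a vector in `Fin d → ℝ` as a sum of scaled standard basis vectors. -/
lemma aux_pi_decomp {d : ℕ} (v : Fin d → ℝ) : v = ∑ i, v i • (Pi.single i 1 : Fin d → ℝ) := by
  funext k
  simp [Finset.sum_apply, Pi.single_apply, mul_ite]

/-- Bilinear expansion of a continuous bilinear form on `Fin d → ℝ` in the standard basis. -/
lemma aux_bilin {d : ℕ} (Q : (Fin d → ℝ) →L[ℝ] ((Fin d → ℝ) →L[ℝ] ℝ)) (v w : Fin d → ℝ) :
    Q v w = ∑ i, ∑ j, v i * w j * Q (Pi.single i 1) (Pi.single j 1) := by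
  conv_lhs => rw [aux_pi_decomp v]
  rw [map_sum, ContinuousLinearMap.sum_apply]
  refine Finset.sum_congr rfl fun i _ => ?_
  rw [_root_.map_smul, ContinuousLinearMap.smul_apply]
  conv_lhs => rw [aux_pi_decomp w]
  rw [map_sum, Finset.smul_sum]
  refine Finset.sum_congr rfl fun j _ => ?_
  rw [_root_.map_smul]
  simp only [smul_eq_mul]
  ring

/-- Multidimensional positive maximum principle on a product state space
`S = S⁽¹⁾ × ⋯ × S⁽ᵈ⁾` where each factor is either `ℝ` or `[0,∞)`.  The generator is
`(Hf)(x) = ∑ᵢ B(x)ᵢ ∂ᵢf(x) + (1/2) ∑ᵢⱼ (Σ(x)Σ(x)ᵀ)ᵢⱼ ∂ᵢ∂ⱼf(x)`, with partial derivatives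
expressed via Fréchet derivatives in the direction of the standard basis vectors. -/
theorem stmt_6 (d m : ℕ) (hd : 0 < d) (hm : 0 < m)
    (F : Fin d → Set ℝ) (hF : ∀ i, F i = Set.univ ∨ F i = Set.Ici 0)
    (B : (Fin d → ℝ) → Fin d → ℝ)
    (Sg : (Fin d → ℝ) → Matrix (Fin d) (Fin m) ℝ)
    (f : (Fin d → ℝ) → ℝ) (hf : ContDiff ℝ 2 f) (hfsupp : HasCompactSupport f)
    (x₀ : Fin d → ℝ) (hx₀ : x₀ ∈ Set.univ.pi F)
    (hmax : ∀ x ∈ Set.univ.pi F, f x ≤ f x₀)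
    (hbdry : ∀ i : Fin d, (x₀ i = 0 ∧ F i = Set.Ici 0) →
      0 ≤ B x₀ i ∧ ∀ j : Fin d, (Sg x₀ * (Sg x₀)ᵀ) i j = 0) :
    (∑ i : Fin d, B x₀ i * fderiv ℝ f x₀ (Pi.single i 1))
      + (1 / 2) * ∑ i : Fin d, ∑ j : Fin d, (Sg x₀ * (Sg x₀)ᵀ) i j *
          fderiv ℝ (fun y => fderiv ℝ f y (Pi.single j 1)) x₀ (Pi.single i 1) ≤ 0 := by
  classical
  set P : Fin d → Prop := fun i => x₀ i = 0 ∧ F i = Set.Ici 0 with hPdef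
  have hx₀' : ∀ i, x₀ i ∈ F i := fun i => Set.mem_univ_pi.mp hx₀ i
  have hdiff : Differentiable ℝ f := hf.differentiable (by norm_num)
  have hf1 : ContDiff ℝ 1 (fderiv ℝ f) := hf.fderiv_right (by norm_num)
  have hdiff' : Differentiable ℝ (fderiv ℝ f) := hf1.differentiable (by norm_num)
  -- derivative of straight-line paths
  have hpath : ∀ (v : Fin d → ℝ) (t : ℝ), HasDerivAt (fun s : ℝ => x₀ + s • v) v t := by
    intro v t
    simpa using ((hasDerivAt_id t).smul_const v).const_add x₀
  have hg1 : ∀ (v : Fin d → ℝ) (t : ℝ),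
      HasDerivAt (fun s : ℝ => f (x₀ + s • v)) (fderiv ℝ f (x₀ + t • v) v) t :=
    fun v t => (hdiff _).hasFDerivAt.comp_hasDerivAt t (hpath v t)
  -- eventual membership in the state space for directions supported off the active boundary
  have hmem : ∀ (v : Fin d → ℝ), (∀ i, P i → v i = 0) →
      ∀ᶠ t in nhds (0:ℝ), x₀ + t • v ∈ Set.univ.pi F := by
    intro v hv
    have h : ∀ᶠ t in nhds (0:ℝ), ∀ i, (x₀ + t • v) i ∈ F i := by
      rw [eventually_all]
      intro i
      rcases hF i with h | h
      · filter_upwards with t; simp [h]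
      · by_cases h0 : x₀ i = 0
        · have hvi : v i = 0 := hv i ⟨h0, h⟩
          filter_upwards with t
          simp [h, h0, hvi]
        · have hpos : 0 < x₀ i := by
            have := hx₀' i
            rw [h] at this
            exact lt_of_le_of_ne this (Ne.symm h0)
          have hcont : ContinuousAt (fun t : ℝ => (x₀ + t • v) i) 0 := by
            have : Continuous (fun t : ℝ => x₀ i + t * v i) :=
              continuous_const.add (continuous_id.mul continuous_const)
            simpa [Pi.add_apply, Pi.smul_apply, smul_eq_mul] using this.continuousAt
          have h00 : (fun t : ℝ => (x₀ + t • v) i) 0 ∈ Set.Ioi (0:ℝ) := by simpa using hpos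
          have := hcont.eventually_mem (isOpen_Ioi.mem_nhds h00)
          filter_upwards [this] with t ht
          rw [h]
          exact le_of_lt (Set.mem_Ioi.mp ht)
    filter_upwards [h] with t ht
    exact Set.mem_univ_pi.mpr ht
  -- local maximality along such directions
  have hlocmax : ∀ (v : Fin d → ℝ), (∀ i, P i → v i = 0) →
      IsLocalMax (fun t : ℝ => f (x₀ + t • v)) 0 := by
    intro v hv
    have : ∀ᶠ t in nhds (0:ℝ), f (x₀ + t • v) ≤ f (x₀ + (0:ℝ) • v) := by
      filter_upwards [hmem v hv] with t ht
      rw [zero_smul, add_zero]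
      exact hmax _ ht
    exact this
  -- first derivative vanishes in interior directions
  have hDzero : ∀ (v : Fin d → ℝ), (∀ i, P i → v i = 0) → fderiv ℝ f x₀ v = 0 := by
    intro v hv
    have h := (hlocmax v hv).deriv_eq_zero
    rw [(hg1 v 0).deriv] at h
    simpa using h
  -- second derivative quadratic form nonpositive in interior directions
  have hQ : ∀ (v : Fin d → ℝ), (∀ i, P i → v i = 0) →
      fderiv ℝ (fderiv ℝ f) x₀ v v ≤ 0 := by
    intro v hv
    have hL : HasFDerivAt (fun y => fderiv ℝ f y v)
        ((ContinuousLinearMap.apply ℝ ℝ v).comp (fderiv ℝ (fderiv ℝ f) x₀)) x₀ := by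
      simpa [Function.comp_def] using
        (ContinuousLinearMap.apply ℝ ℝ v).hasFDerivAt.comp x₀ (hdiff' x₀).hasFDerivAt
    have hL' : HasFDerivAt (fun y => fderiv ℝ f y v)
        ((ContinuousLinearMap.apply ℝ ℝ v).comp (fderiv ℝ (fderiv ℝ f) x₀))
        (x₀ + (0:ℝ) • v) := by simpa using hL
    have hg2 : HasDerivAt (fun t : ℝ => fderiv ℝ f (x₀ + t • v) v)
        (fderiv ℝ (fderiv ℝ f) x₀ v v) 0 := by
      have h := hL'.comp_hasDerivAt 0 (hpath v 0)
      simp at h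
      exact h
    exact aux_sd_test (hg1 v) hg2 (hlocmax v hv)
  -- boundary first-order term
  have hDbdry : ∀ i, P i → fderiv ℝ f x₀ (Pi.single i 1) ≤ 0 := by
    intro i hi
    have hmemI : ∀ t : ℝ, 0 ≤ t → x₀ + t • (Pi.single i 1 : Fin d → ℝ) ∈ Set.univ.pi F := by
      intro t ht
      refine Set.mem_univ_pi.mpr fun j => ?_
      by_cases hj : j = i
      · subst hj
        have : (x₀ + t • (Pi.single j 1 : Fin d → ℝ)) j = t := by
          simp [Pi.single_eq_same, hi.1]
        rw [this, hi.2]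
        exact ht
      · have : (x₀ + t • (Pi.single i 1 : Fin d → ℝ)) j = x₀ j := by
          simp [Pi.single_eq_of_ne hj]
        rw [this]
        exact hx₀' j
    have hDW : HasDerivWithinAt (fun t : ℝ => f (x₀ + t • (Pi.single i 1 : Fin d → ℝ)))
        (fderiv ℝ f x₀ (Pi.single i 1)) (Set.Ioi 0) 0 := by
      have h := hg1 (Pi.single i 1 : Fin d → ℝ) 0
      simp only [zero_smul, add_zero] at h
      exact h.hasDerivWithinAt
    have hslope := (hasDerivWithinAt_iff_tendsto_slope' Set.notMem_Ioi_self).mp hDW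
    refine le_of_tendsto hslope ?_
    filter_upwards [self_mem_nhdsWithin] with t ht
    have ht' : (0:ℝ) < t := ht
    rw [slope_def_field]
    have hle : f (x₀ + t • (Pi.single i 1 : Fin d → ℝ)) ≤ f (x₀ + (0:ℝ) • (Pi.single i 1 : Fin d → ℝ)) := by
      rw [zero_smul, add_zero]
      exact hmax _ (hmemI t ht'.le)
    exact div_nonpos_of_nonpos_of_nonneg (by linarith) (by linarith)
  -- first-order sum nonpositive
  have hfirst : (∑ i : Fin d, B x₀ i * fderiv ℝ f x₀ (Pi.single i 1)) ≤ 0 := by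
    refine Finset.sum_nonpos fun i _ => ?_
    by_cases h : P i
    · exact mul_nonpos_of_nonneg_of_nonpos (hbdry i h).1 (hDbdry i h)
    · have hs : ∀ j, P j → (Pi.single i 1 : Fin d → ℝ) j = 0 := by
        intro j hj
        rcases eq_or_ne j i with rfl | hne
        · exact absurd hj h
        · exact Pi.single_eq_of_ne hne 1
      rw [hDzero _ hs, mul_zero]
  -- second-order analysis
  set A : Matrix (Fin d) (Fin d) ℝ := Sg x₀ * (Sg x₀)ᵀ with hAdef
  have hAapp : ∀ i j, A i j = ∑ k, Sg x₀ i k * Sg x₀ j k := by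
    intro i j
    simp [hAdef, Matrix.mul_apply, Matrix.transpose_apply]
  set w : Fin m → Fin d → ℝ := fun k i => if P i then 0 else Sg x₀ i k with hwdef
  have hwP : ∀ k i, P i → w k i = 0 := fun k i hi => if_pos hi
  have hwnP : ∀ k i, ¬ P i → w k i = Sg x₀ i k := fun k i hi => if_neg hi
  have hAw : ∀ i j, A i j = ∑ k, w k i * w k j := by
    intro i j
    by_cases hi : P i
    · rw [(hbdry i hi).2 j]
      symm
      refine Finset.sum_eq_zero fun k _ => ?_
      rw [hwP k i hi, zero_mul]
    · by_cases hj : P j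
      · have h1 : A j i = 0 := (hbdry j hj).2 i
        have h2 : A i j = A j i := by
          rw [hAapp, hAapp]
          exact Finset.sum_congr rfl fun k _ => mul_comm _ _
        rw [h2, h1]
        symm
        refine Finset.sum_eq_zero fun k _ => ?_
        rw [hwP k j hj, mul_zero]
      · rw [hAapp]
        refine Finset.sum_congr rfl fun k _ => ?_
        rw [hwnP k i hi, hwnP k j hj]
  have hQw : ∀ k, fderiv ℝ (fderiv ℝ f) x₀ (w k) (w k) ≤ 0 := by
    intro k
    exact hQ (w k) fun i hi => hwP k i hi
  -- identify iterated directional derivatives with the second Fréchet derivative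
  have hHQ : ∀ i j : Fin d,
      fderiv ℝ (fun y => fderiv ℝ f y (Pi.single j 1)) x₀ (Pi.single i 1)
        = fderiv ℝ (fderiv ℝ f) x₀ (Pi.single i 1) (Pi.single j 1) := by
    intro i j
    have hL : HasFDerivAt (fun y => fderiv ℝ f y (Pi.single j 1))
        ((ContinuousLinearMap.apply ℝ ℝ (Pi.single j 1 : Fin d → ℝ)).comp
          (fderiv ℝ (fderiv ℝ f) x₀)) x₀ := by
      simpa [Function.comp_def] using
        (ContinuousLinearMap.apply ℝ ℝ (Pi.single j 1 : Fin d → ℝ)).hasFDerivAt.comp x₀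
          (hdiff' x₀).hasFDerivAt
    rw [hL.fderiv]
    rfl
  have hsecond : ∑ i : Fin d, ∑ j : Fin d, A i j *
      fderiv ℝ (fun y => fderiv ℝ f y (Pi.single j 1)) x₀ (Pi.single i 1) ≤ 0 := by
    have key : ∑ i : Fin d, ∑ j : Fin d, A i j *
        fderiv ℝ (fderiv ℝ f) x₀ (Pi.single i 1) (Pi.single j 1)
        = ∑ k, fderiv ℝ (fderiv ℝ f) x₀ (w k) (w k) := by
      calc ∑ i : Fin d, ∑ j : Fin d, A i j *
          fderiv ℝ (fderiv ℝ f) x₀ (Pi.single i 1) (Pi.single j 1)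
          = ∑ i : Fin d, ∑ j : Fin d, ∑ k, w k i * w k j *
            fderiv ℝ (fderiv ℝ f) x₀ (Pi.single i 1) (Pi.single j 1) := by
            refine Finset.sum_congr rfl fun i _ => Finset.sum_congr rfl fun j _ => ?_
            rw [hAw i j, Finset.sum_mul]
        _ = ∑ i : Fin d, ∑ k, ∑ j : Fin d, w k i * w k j *
            fderiv ℝ (fderiv ℝ f) x₀ (Pi.single i 1) (Pi.single j 1) := by
            exact Finset.sum_congr rfl fun i _ => Finset.sum_comm
        _ = ∑ k, ∑ i : Fin d, ∑ j : Fin d, w k i * w k j *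
            fderiv ℝ (fderiv ℝ f) x₀ (Pi.single i 1) (Pi.single j 1) := Finset.sum_comm
        _ = ∑ k, fderiv ℝ (fderiv ℝ f) x₀ (w k) (w k) := by
            refine Finset.sum_congr rfl fun k _ => (aux_bilin _ _ _).symm
    have h1 : ∑ i : Fin d, ∑ j : Fin d, A i j *
        fderiv ℝ (fun y => fderiv ℝ f y (Pi.single j 1)) x₀ (Pi.single i 1)
        = ∑ k, fderiv ℝ (fderiv ℝ f) x₀ (w k) (w k) := by
      rw [← key]
      refine Finset.sum_congr rfl fun i _ => Finset.sum_congr rfl fun j _ => ?_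
      rw [hHQ i j]
    rw [h1]
    exact Finset.sum_nonpos fun k _ => hQw k
  have h2 : (1 / 2 : ℝ) * (∑ i : Fin d, ∑ j : Fin d, A i j *
      fderiv ℝ (fun y => fderiv ℝ f y (Pi.single j 1)) x₀ (Pi.single i 1)) ≤ 0 :=
    mul_nonpos_of_nonneg_of_nonpos (by norm_num) hsecond
  linarith
end

section
/- Let N ≥ 1 and let b, β, c, γ, Γ : ℝ^N → ℝ satisfy Assumptions B with constants b₀, β₀, c₀, γ₀, Γ₀ ≥ 0. Then for every z₀ ∈ ℝ^N there exists a continuous nondecreasing function g : [0,∞) → [0,∞), depending only on N, z₀ and the constants b₀, β₀, c₀, γ₀, Γ₀, such that every differentiable solution z : [0,T) → ℝ^N of the moment ODE system with z(0) = z₀ satisfies ‖z(t)‖_N^{2N} ≤ g(t) for all t ∈ [0,T). -/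
open MeasureTheory

lemma normN_nonneg (N : ℕ) (x : Fin N → ℝ) : 0 ≤ normN N x := Real.sqrt_nonneg _

lemma sq_normN (N : ℕ) (x : Fin N → ℝ) :
    normN N x ^ 2 = ∑ i : Fin N, |x i| ^ ((2 : ℝ) / ((i : ℕ) + 1)) :=
  Real.sq_sqrt (Finset.sum_nonneg fun i _ => by positivity)

lemma comp_le (N : ℕ) (x : Fin N → ℝ) (i : Fin N) :
    |x i| ≤ (1 + normN N x) ^ ((i : ℕ) + 1) := by
  have hi0 : (0:ℝ) < (i : ℕ) + 1 := by positivity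
  have h1 : |x i| ^ ((2:ℝ)/((i:ℕ)+1)) ≤ normN N x ^ 2 := by
    rw [sq_normN]
    exact Finset.single_le_sum (f := fun j : Fin N => |x j| ^ ((2:ℝ)/(((j:ℕ):ℝ)+1)))
      (fun j _ => by positivity) (Finset.mem_univ i)
  have h2 := Real.rpow_le_rpow (by positivity) h1
    (by positivity : (0:ℝ) ≤ (((i:ℕ):ℝ)+1)/2)
  have hL : (|x i| ^ ((2:ℝ)/((i:ℕ)+1))) ^ ((((i:ℕ):ℝ)+1)/2) = |x i| := by
    rw [← Real.rpow_mul (abs_nonneg _)]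
    rw [show (2:ℝ)/(((i:ℕ):ℝ)+1) * ((((i:ℕ):ℝ)+1)/2) = 1 by field_simp]
    exact Real.rpow_one _
  have hR : ((normN N x) ^ 2) ^ ((((i:ℕ):ℝ)+1)/2) = normN N x ^ ((i:ℕ)+1) := by
    rw [← Real.rpow_natCast (normN N x) 2, ← Real.rpow_mul (normN_nonneg N x)]
    rw [show (((2:ℕ):ℝ)) * ((((i:ℕ):ℝ)+1)/2) = (((i:ℕ)+1 : ℕ) : ℝ) by push_cast; ring]
    exact Real.rpow_natCast _ _
  rw [hL, hR] at h2
  exact h2.trans (pow_le_pow_left₀ (normN_nonneg N x) (by linarith) _)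

lemma extComp_le (N : ℕ) (x : Fin N → ℝ) (j : ℤ) :
    |extComp N x j| ≤ (1 + normN N x) ^ j.toNat := by
  unfold extComp
  split_ifs with h1 h2
  · have h := comp_le N x ⟨(j - 1).toNat, by omega⟩
    rw [show j.toNat = (j-1).toNat + 1 by omega]
    exact h
  · subst h2; simp
  · simp only [abs_zero]
    have := normN_nonneg N x
    positivity

def mexp (N : ℕ) (i : Fin N) : ℕ := 2 * (N.factorial / ((i : ℕ) + 1))

lemma mexp_mul (N : ℕ) (i : Fin N) : ((i : ℕ) + 1) * mexp N i = 2 * N.factorial := by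
  have hdvd : ((i : ℕ) + 1) ∣ N.factorial :=
    Nat.dvd_factorial (Nat.succ_pos _) i.isLt
  obtain ⟨q, hq⟩ := hdvd
  unfold mexp
  rw [hq, Nat.mul_div_cancel_left _ (Nat.succ_pos _)]
  ring

lemma mexp_even (N : ℕ) (i : Fin N) : Even (mexp N i) := even_two_mul _

noncomputable def Wfun (N : ℕ) (x : Fin N → ℝ) : ℝ := ∑ i : Fin N, (x i) ^ (mexp N i)

lemma Wfun_nonneg (N : ℕ) (x : Fin N → ℝ) : 0 ≤ Wfun N x :=
  Finset.sum_nonneg fun i _ => (mexp_even N i).pow_nonneg _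

lemma rpow_key (N : ℕ) (x : Fin N → ℝ) (i : Fin N) :
    (|x i| ^ ((2:ℝ)/(((i:ℕ):ℝ)+1))) ^ N.factorial = (x i) ^ (mexp N i) := by
  rw [← Real.rpow_natCast (|x i| ^ ((2:ℝ)/(((i:ℕ):ℝ)+1))) N.factorial,
    ← Real.rpow_mul (by positivity)]
  have h : (2:ℝ)/(((i:ℕ):ℝ)+1) * (N.factorial : ℝ) = ((mexp N i : ℕ) : ℝ) := by
    have h1 : ((((i:ℕ) + 1) * mexp N i : ℕ) : ℝ) = ((2 * N.factorial : ℕ) : ℝ) := by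
      rw [mexp_mul]
    push_cast at h1
    have hi : (0:ℝ) < ((i:ℕ):ℝ) + 1 := by positivity
    field_simp
    linarith
  rw [h, Real.rpow_natCast, (mexp_even N i).pow_abs]

lemma normN_pow_le (N : ℕ) (hN : 0 < N) (x : Fin N → ℝ) :
    normN N x ^ (2 * N.factorial) ≤ (N:ℝ) ^ (N.factorial - 1) * Wfun N x := by
  have hM1 : 1 ≤ N.factorial := N.factorial_pos
  obtain ⟨M', hM'⟩ : ∃ M', N.factorial = M' + 1 := ⟨N.factorial - 1, by omega⟩
  have h2 := pow_sum_div_card_le_sum_pow (s := (Finset.univ : Finset (Fin N)))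
      (f := fun i => |x i| ^ ((2:ℝ)/(((i:ℕ):ℝ)+1))) (fun i _ => by positivity) M'
  have hcard : ((Finset.univ : Finset (Fin N)).card : ℝ) = (N : ℝ) := by simp
  rw [div_le_iff₀ (by rw [hcard]; positivity)] at h2
  have key : normN N x ^ (2 * N.factorial)
      = (∑ i : Fin N, |x i| ^ ((2:ℝ)/(((i:ℕ):ℝ)+1))) ^ N.factorial := by
    rw [pow_mul, sq_normN]
  rw [key]
  calc (∑ i : Fin N, |x i| ^ ((2:ℝ)/(((i:ℕ):ℝ)+1))) ^ N.factorial
      = (∑ i : Fin N, |x i| ^ ((2:ℝ)/(((i:ℕ):ℝ)+1))) ^ (M' + 1) := by rw [hM']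
    _ ≤ (∑ i : Fin N, (|x i| ^ ((2:ℝ)/(((i:ℕ):ℝ)+1))) ^ (M' + 1)) * ((Finset.univ : Finset (Fin N)).card : ℝ) ^ M' := h2
    _ = (N:ℝ) ^ (N.factorial - 1) * Wfun N x := by
        rw [hcard, mul_comm, hM', Nat.add_sub_cancel]
        congr 1
        · unfold Wfun
          refine Finset.sum_congr rfl fun i _ => ?_
          rw [← hM', rpow_key]

lemma momentRHS_le (N : ℕ) (hN : 0 < N) (b β c γ Γ : (Fin N → ℝ) → ℝ)
    (b₀ β₀ c₀ γ₀ Γ₀ : ℝ) (hb₀ : 0 ≤ b₀) (hβ₀ : 0 ≤ β₀) (hc₀ : 0 ≤ c₀)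
    (hγ₀ : 0 ≤ γ₀) (hΓ₀ : 0 ≤ Γ₀)
    (hβb : ∀ x, |β x| ≤ β₀) (hΓb : ∀ x, |Γ x| ≤ Γ₀)
    (hbb : ∀ x : Fin N → ℝ, |b x| ≤ b₀ * (1 + normN N x))
    (hγb : ∀ x : Fin N → ℝ, |γ x| ≤ γ₀ * (1 + normN N x))
    (hcb : ∀ x : Fin N → ℝ, |c x| ≤ c₀ * (1 + (normN N x) ^ 2))
    (x : Fin N → ℝ) (k : Fin N) :
    |momentRHS N b β c γ Γ x k| ≤
      (N:ℝ)^2 * (β₀ + Γ₀ + b₀ + γ₀ + c₀) * (1 + normN N x) ^ ((k:ℕ) + 1) := by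
  have hn0 := normN_nonneg N x
  set s := 1 + normN N x with hsdef
  have hs1 : 1 ≤ s := by simp only [hsdef]; linarith
  have hs0 : (0:ℝ) ≤ s := by linarith
  have hk1 : ((k:ℕ):ℝ) + 1 ≤ (N:ℝ) := by exact_mod_cast k.isLt
  have hN1 : (1:ℝ) ≤ (N:ℝ) := by exact_mod_cast hN
  have hkR : (0:ℝ) ≤ ((k:ℕ):ℝ) := Nat.cast_nonneg _
  have hc1 : (0:ℝ) ≤ ((k:ℕ):ℝ) + 1 := by linarith
  have hc2 : (0:ℝ) ≤ (((k:ℕ):ℝ) + 1) * ((k:ℕ):ℝ) / 2 := by positivity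
  have hc2N : (((k:ℕ):ℝ) + 1) * ((k:ℕ):ℝ) / 2 ≤ (N:ℝ)^2 := by nlinarith
  have hc1N : ((k:ℕ):ℝ) + 1 ≤ (N:ℝ)^2 := by nlinarith
  have hxk : |x k| ≤ s ^ ((k:ℕ) + 1) := comp_le N x k
  have he1 : |extComp N x ((k:ℕ):ℤ)| ≤ s ^ (k:ℕ) := by
    have h := extComp_le N x ((k:ℕ):ℤ)
    simpa using h
  have hb' : |b x| ≤ b₀ * s := hbb x
  have hγ' : |γ x| ≤ γ₀ * s := hγb x
  have hc' : |c x| ≤ c₀ * s^2 := by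
    refine (hcb x).trans ?_
    have : 1 + normN N x ^ 2 ≤ s^2 := by nlinarith
    nlinarith
  unfold momentRHS
  set A := (((k:ℕ) + 1 : ℝ) * β x + (((k:ℕ) + 1 : ℝ) * ((k:ℕ):ℝ) / 2) * Γ x) * x k with hA
  set B := (((k:ℕ) + 1 : ℝ) * b x + (((k:ℕ) + 1 : ℝ) * ((k:ℕ):ℝ) / 2) * γ x)
      * extComp N x ((k:ℕ) : ℤ) with hB
  set C := (((k:ℕ) + 1 : ℝ) * ((k:ℕ):ℝ) / 2) * c x * extComp N x (((k:ℕ) : ℤ) - 1) with hC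
  have HA : |A| ≤ ((N:ℝ)^2 * β₀ + (N:ℝ)^2 * Γ₀) * s ^ ((k:ℕ)+1) := by
    rw [hA, abs_mul]
    refine mul_le_mul ?_ hxk (abs_nonneg _) (by positivity)
    refine (abs_add_le _ _).trans ?_
    rw [abs_mul, abs_mul, abs_of_nonneg hc1, abs_of_nonneg hc2]
    have h1 := mul_le_mul hc1N (hβb x) (abs_nonneg _) (by positivity)
    have h2 := mul_le_mul hc2N (hΓb x) (abs_nonneg _) (by positivity)
    exact add_le_add h1 h2
  have HB : |B| ≤ ((N:ℝ)^2 * b₀ + (N:ℝ)^2 * γ₀) * s ^ ((k:ℕ)+1) := by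
    rw [hB, abs_mul]
    have hcoef : |(((k:ℕ) + 1 : ℝ) * b x + (((k:ℕ) + 1 : ℝ) * ((k:ℕ):ℝ) / 2) * γ x)|
        ≤ (N:ℝ)^2 * (b₀ * s) + (N:ℝ)^2 * (γ₀ * s) := by
      refine (abs_add_le _ _).trans ?_
      rw [abs_mul, abs_mul, abs_of_nonneg hc1, abs_of_nonneg hc2]
      have h1 := mul_le_mul hc1N hb' (abs_nonneg _) (by positivity)
      have h2 := mul_le_mul hc2N hγ' (abs_nonneg _) (by positivity)
      exact add_le_add h1 h2
    calc |((k:ℕ) + 1 : ℝ) * b x + (((k:ℕ) + 1 : ℝ) * ((k:ℕ):ℝ) / 2) * γ x|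
          * |extComp N x ((k:ℕ) : ℤ)|
        ≤ ((N:ℝ)^2 * (b₀ * s) + (N:ℝ)^2 * (γ₀ * s)) * s ^ (k:ℕ) :=
          mul_le_mul hcoef he1 (abs_nonneg _) (by positivity)
      _ = ((N:ℝ)^2 * b₀ + (N:ℝ)^2 * γ₀) * s ^ ((k:ℕ)+1) := by ring
  have HC : |C| ≤ (N:ℝ)^2 * c₀ * s ^ ((k:ℕ)+1) := by
    rcases Nat.eq_zero_or_pos (k:ℕ) with hk0 | hk0
    · rw [hC]
      simp only [hk0]
      norm_num
      positivity
    · have hext : |extComp N x (((k:ℕ):ℤ) - 1)| ≤ s ^ ((k:ℕ) - 1) := by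
        have h := extComp_le N x (((k:ℕ):ℤ) - 1)
        rwa [show (((k:ℕ):ℤ) - 1).toNat = (k:ℕ) - 1 by omega] at h
      rw [hC]
      calc |(((k:ℕ) + 1 : ℝ) * ((k:ℕ):ℝ) / 2) * c x * extComp N x (((k:ℕ) : ℤ) - 1)|
          = ((((k:ℕ):ℝ) + 1) * ((k:ℕ):ℝ) / 2) * |c x| * |extComp N x (((k:ℕ) : ℤ) - 1)| := by
            rw [abs_mul, abs_mul, abs_of_nonneg hc2]
        _ ≤ ((N:ℝ)^2 * (c₀ * s^2)) * s ^ ((k:ℕ) - 1) := by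
            refine mul_le_mul (mul_le_mul hc2N hc' (abs_nonneg _) (by positivity)) hext
              (abs_nonneg _) (by positivity)
        _ = (N:ℝ)^2 * c₀ * s ^ ((k:ℕ)+1) := by
            rw [show (k:ℕ) + 1 = ((k:ℕ) - 1) + 2 by omega]
            ring
  have habs : |A + B + C| ≤ |A| + |B| + |C| :=
    (abs_add_le _ _).trans (add_le_add_left (abs_add_le _ _) _)
  have hring : ((N:ℝ)^2 * β₀ + (N:ℝ)^2 * Γ₀) * s ^ ((k:ℕ)+1)
      + ((N:ℝ)^2 * b₀ + (N:ℝ)^2 * γ₀) * s ^ ((k:ℕ)+1)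
      + (N:ℝ)^2 * c₀ * s ^ ((k:ℕ)+1)
      = (N:ℝ)^2 * (β₀ + Γ₀ + b₀ + γ₀ + c₀) * s ^ ((k:ℕ)+1) := by ring
  linarith

lemma derivsum_le (N : ℕ) (hN : 0 < N) (b β c γ Γ : (Fin N → ℝ) → ℝ)
    (b₀ β₀ c₀ γ₀ Γ₀ : ℝ) (hb₀ : 0 ≤ b₀) (hβ₀ : 0 ≤ β₀) (hc₀ : 0 ≤ c₀)
    (hγ₀ : 0 ≤ γ₀) (hΓ₀ : 0 ≤ Γ₀)
    (hβb : ∀ x, |β x| ≤ β₀) (hΓb : ∀ x, |Γ x| ≤ Γ₀)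
    (hbb : ∀ x : Fin N → ℝ, |b x| ≤ b₀ * (1 + normN N x))
    (hγb : ∀ x : Fin N → ℝ, |γ x| ≤ γ₀ * (1 + normN N x))
    (hcb : ∀ x : Fin N → ℝ, |c x| ≤ c₀ * (1 + (normN N x) ^ 2))
    (x : Fin N → ℝ) :
    |∑ k : Fin N, ((mexp N k : ℕ):ℝ) * (x k) ^ (mexp N k - 1) * momentRHS N b β c γ Γ x k|
      ≤ (N:ℝ) * ((2 * N.factorial : ℕ):ℝ) * ((N:ℝ)^2 * (β₀ + Γ₀ + b₀ + γ₀ + c₀))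
          * (1 + normN N x) ^ (2 * N.factorial) := by
  have hn0 := normN_nonneg N x
  set s := 1 + normN N x with hsdef
  have hs0 : (0:ℝ) ≤ s := by simp only [hsdef]; linarith
  have hterm : ∀ k : Fin N,
      |((mexp N k : ℕ):ℝ) * (x k) ^ (mexp N k - 1) * momentRHS N b β c γ Γ x k|
        ≤ ((2 * N.factorial : ℕ):ℝ) * ((N:ℝ)^2 * (β₀ + Γ₀ + b₀ + γ₀ + c₀))
            * s ^ (2 * N.factorial) := by
    intro k
    have hm := mexp_mul N k
    have hm1 : 1 ≤ mexp N k := by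
      rcases Nat.eq_zero_or_pos (mexp N k) with h | h
      · rw [h, mul_zero] at hm
        have := N.factorial_pos
        omega
      · exact h
    obtain ⟨m', hm'⟩ : ∃ m', mexp N k = m' + 1 := ⟨mexp N k - 1, by omega⟩
    have hmle : ((mexp N k : ℕ):ℝ) ≤ ((2 * N.factorial : ℕ):ℝ) := by
      have : mexp N k ≤ 2 * N.factorial := by
        unfold mexp
        exact Nat.mul_le_mul_left 2 (Nat.div_le_self _ _)
      exact_mod_cast this
    have hxk : |x k| ≤ s ^ ((k:ℕ) + 1) := comp_le N x k
    have hRHS := momentRHS_le N hN b β c γ Γ b₀ β₀ c₀ γ₀ Γ₀ hb₀ hβ₀ hc₀ hγ₀ hΓ₀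
      hβb hΓb hbb hγb hcb x k
    calc |((mexp N k : ℕ):ℝ) * (x k) ^ (mexp N k - 1) * momentRHS N b β c γ Γ x k|
        = ((mexp N k : ℕ):ℝ) * |x k| ^ (mexp N k - 1) * |momentRHS N b β c γ Γ x k| := by
          rw [abs_mul, abs_mul, abs_pow, Nat.abs_cast]
      _ ≤ ((2 * N.factorial : ℕ):ℝ) * (s ^ ((k:ℕ)+1)) ^ (mexp N k - 1)
            * ((N:ℝ)^2 * (β₀ + Γ₀ + b₀ + γ₀ + c₀) * s ^ ((k:ℕ) + 1)) := by
          refine mul_le_mul (mul_le_mul hmle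
            (pow_le_pow_left₀ (abs_nonneg _) hxk _) (by positivity) (by positivity))
            hRHS (abs_nonneg _) (by positivity)
      _ = ((2 * N.factorial : ℕ):ℝ) * ((N:ℝ)^2 * (β₀ + Γ₀ + b₀ + γ₀ + c₀))
            * s ^ (2 * N.factorial) := by
          have hexp : ((k:ℕ)+1) * (mexp N k - 1) + ((k:ℕ) + 1) = 2 * N.factorial := by
            rw [hm', Nat.add_sub_cancel, ← hm, hm']
            ring
          rw [← pow_mul, ← hexp, pow_add]
          ring
  calc |∑ k : Fin N, ((mexp N k : ℕ):ℝ) * (x k) ^ (mexp N k - 1) * momentRHS N b β c γ Γ x k|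
      ≤ ∑ k : Fin N, |((mexp N k : ℕ):ℝ) * (x k) ^ (mexp N k - 1) * momentRHS N b β c γ Γ x k| :=
        Finset.abs_sum_le_sum_abs _ _
    _ ≤ ∑ _k : Fin N, ((2 * N.factorial : ℕ):ℝ) * ((N:ℝ)^2 * (β₀ + Γ₀ + b₀ + γ₀ + c₀))
          * s ^ (2 * N.factorial) := Finset.sum_le_sum fun k _ => hterm k
    _ = (N:ℝ) * ((2 * N.factorial : ℕ):ℝ) * ((N:ℝ)^2 * (β₀ + Γ₀ + b₀ + γ₀ + c₀))
          * s ^ (2 * N.factorial) := by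
        rw [Finset.sum_const, Finset.card_univ, Fintype.card_fin, nsmul_eq_mul]
        ring

set_option maxHeartbeats 1000000

/-- Under Assumptions B, for each initial value there is a continuous
nondecreasing function `g` on `[0,∞)` (depending only on `N`, `z₀` and the constants) bounding
`‖z(t)‖_N^{2N}` along every solution of the moment ODE system started at `z₀`. -/
theorem stmt_8 (N : ℕ) (hN : 0 < N)
    (b β c γ Γ : (Fin N → ℝ) → ℝ)
    (b₀ β₀ c₀ γ₀ Γ₀ : ℝ) (hb₀ : 0 ≤ b₀) (hβ₀ : 0 ≤ β₀) (hc₀ : 0 ≤ c₀)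
    (hγ₀ : 0 ≤ γ₀) (hΓ₀ : 0 ≤ Γ₀)
    (hβb : ∀ x, |β x| ≤ β₀) (hΓb : ∀ x, |Γ x| ≤ Γ₀)
    (hbb : ∀ x : Fin N → ℝ, |b x| ≤ b₀ * (1 + normN N x))
    (hγb : ∀ x : Fin N → ℝ, |γ x| ≤ γ₀ * (1 + normN N x))
    (hcb : ∀ x : Fin N → ℝ, |c x| ≤ c₀ * (1 + (normN N x) ^ 2))
    (z₀ : Fin N → ℝ) :
    ∃ g : ℝ → ℝ,
      ContinuousOn g (Set.Ici 0) ∧ MonotoneOn g (Set.Ici 0) ∧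
      (∀ t ∈ Set.Ici (0 : ℝ), 0 ≤ g t) ∧
      ∀ (T : ℝ) (z : ℝ → Fin N → ℝ), z 0 = z₀ →
        IsMomentSol N b β c γ Γ (Set.Ico 0 T) z →
        ∀ t ∈ Set.Ico (0 : ℝ) T, (normN N (z t)) ^ (2 * N) ≤ g t := by
  classical
  have hM1 : 1 ≤ N.factorial := N.factorial_pos
  set M := N.factorial with hMdef
  have hN1 : (1:ℝ) ≤ (N:ℝ) := by exact_mod_cast hN
  set C₁ : ℝ := (N:ℝ)^2 * (β₀ + Γ₀ + b₀ + γ₀ + c₀) with hC₁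
  have hC₁0 : 0 ≤ C₁ := by rw [hC₁]; positivity
  set K₀ : ℝ := (N:ℝ) * ((2 * M : ℕ):ℝ) * C₁ with hK₀
  have hK₀0 : 0 ≤ K₀ := by rw [hK₀]; positivity
  set NM : ℝ := (N:ℝ) ^ (M - 1) with hNMdef
  have hNM1 : (1:ℝ) ≤ NM := one_le_pow₀ hN1
  have hNM0 : (0:ℝ) ≤ NM := by linarith
  set K : ℝ := K₀ * 2 ^ (2 * M) * NM + 1 with hK
  have hP0 : (0:ℝ) ≤ K₀ * 2 ^ (2 * M) := by positivity
  have hK1 : (1:ℝ) ≤ K := by nlinarith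
  have hKpos : (0:ℝ) < K := by linarith
  set W₀ : ℝ := Wfun N z₀ with hW₀def
  have hW₀0 : 0 ≤ W₀ := Wfun_nonneg N z₀
  refine ⟨fun t => 1 + NM * ((W₀ + 1) * Real.exp (K * t)), ?_, ?_, ?_, ?_⟩
  · exact (by fun_prop : Continuous fun t => 1 + NM * ((W₀ + 1) * Real.exp (K * t))).continuousOn
  · intro t1 ht1 t2 ht2 h12
    have he : Real.exp (K * t1) ≤ Real.exp (K * t2) :=
      Real.exp_le_exp.mpr (mul_le_mul_of_nonneg_left h12 (le_of_lt hKpos))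
    have h1 : (W₀ + 1) * Real.exp (K * t1) ≤ (W₀ + 1) * Real.exp (K * t2) :=
      mul_le_mul_of_nonneg_left he (by linarith)
    have := mul_le_mul_of_nonneg_left h1 hNM0
    show (1:ℝ) + NM * ((W₀ + 1) * Real.exp (K * t1)) ≤ 1 + NM * ((W₀ + 1) * Real.exp (K * t2))
    linarith
  · intro t ht
    have h0 : 0 ≤ NM * ((W₀ + 1) * Real.exp (K * t)) :=
      mul_nonneg hNM0 (mul_nonneg (by linarith) (Real.exp_pos _).le)
    show (0:ℝ) ≤ 1 + NM * ((W₀ + 1) * Real.exp (K * t))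
    linarith
  · intro T z hz0 hsol t ht
    obtain ⟨ht0, htT⟩ := ht
    set f : ℝ → ℝ := fun u => Wfun N (z u) with hf
    set f' : ℝ → ℝ := fun u => ∑ k : Fin N,
      ((mexp N k : ℕ):ℝ) * (z u k) ^ (mexp N k - 1) * momentRHS N b β c γ Γ (z u) k with hf'
    have hderiv : ∀ u ∈ Set.Ico (0:ℝ) T, HasDerivWithinAt f (f' u) (Set.Ico 0 T) u := by
      intro u hu
      exact HasDerivWithinAt.fun_sum fun k _ => (hsol k u hu).pow (mexp N k)
    have hcont : ContinuousOn f (Set.Ico 0 T) := fun u hu => (hderiv u hu).continuousWithinAt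
    have hbound : ∀ u ∈ Set.Ico (0:ℝ) T, ‖f' u‖ ≤ K * ‖f u‖ + K := by
      intro u hu
      have hW := Wfun_nonneg N (z u)
      have hnn := normN_nonneg N (z u)
      have h1 : |f' u| ≤ K₀ * (1 + normN N (z u)) ^ (2 * M) := by
        rw [hK₀, hC₁]
        exact derivsum_le N hN b β c γ Γ b₀ β₀ c₀ γ₀ Γ₀ hb₀ hβ₀ hc₀ hγ₀ hΓ₀
          hβb hΓb hbb hγb hcb (z u)
      have h2 : (1 + normN N (z u)) ^ (2 * M) ≤ 2 ^ (2 * M) * (1 + normN N (z u) ^ (2 * M)) := by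
        have h2M0 : (0:ℝ) ≤ 2 ^ (2 * M) := by positivity
        have hpa : (0:ℝ) ≤ normN N (z u) ^ (2 * M) := by positivity
        rcases le_total (normN N (z u)) 1 with h | h
        · have hp := pow_le_pow_left₀ (by linarith : (0:ℝ) ≤ 1 + normN N (z u))
            (by linarith : 1 + normN N (z u) ≤ 2) (2 * M)
          nlinarith
        · have hp := pow_le_pow_left₀ (by linarith : (0:ℝ) ≤ 1 + normN N (z u))
            (by linarith : 1 + normN N (z u) ≤ 2 * normN N (z u)) (2 * M)
          rw [mul_pow] at hp
          nlinarith
      have h3 : normN N (z u) ^ (2 * M) ≤ NM * Wfun N (z u) := normN_pow_le N hN (z u)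
      rw [Real.norm_eq_abs, Real.norm_eq_abs, abs_of_nonneg hW]
      have key : K₀ * 2 ^ (2 * M) ≤ K₀ * 2 ^ (2 * M) * NM := by nlinarith
      calc |f' u| ≤ K₀ * (1 + normN N (z u)) ^ (2 * M) := h1
        _ ≤ K₀ * (2 ^ (2 * M) * (1 + normN N (z u) ^ (2 * M))) :=
            mul_le_mul_of_nonneg_left h2 hK₀0
        _ ≤ K₀ * (2 ^ (2 * M) * (1 + NM * Wfun N (z u))) := by
            refine mul_le_mul_of_nonneg_left ?_ hK₀0
            refine mul_le_mul_of_nonneg_left (by linarith) (by positivity)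
        _ ≤ K * Wfun N (z u) + K := by
            rw [hK]
            nlinarith [mul_nonneg hP0 hW, mul_nonneg (mul_nonneg hP0 hNM0) hW]
    have hsub : Set.Icc (0:ℝ) t ⊆ Set.Ico 0 T := fun u hu => ⟨hu.1, lt_of_le_of_lt hu.2 htT⟩
    have hsub' : Set.Ico (0:ℝ) t ⊆ Set.Ico 0 T := fun u hu => ⟨hu.1, lt_trans hu.2 htT⟩
    have hf0 : ‖f 0‖ ≤ W₀ := by
      rw [Real.norm_eq_abs, hf]
      simp only [hz0]
      rw [abs_of_nonneg (Wfun_nonneg N z₀)]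
    have hg := norm_le_gronwallBound_of_norm_deriv_right_le (f := f) (f' := f')
      (δ := W₀) (K := K) (ε := K) (a := 0) (b := t)
      (hcont.mono hsub)
      (fun u hu => (hderiv u (hsub' hu)).mono_of_mem_nhdsWithin
        (Ico_mem_nhdsGE_of_mem (hsub' hu)))
      hf0
      (fun u hu => hbound u (hsub' hu))
      t (Set.right_mem_Icc.mpr ht0)
    rw [sub_zero, Real.norm_eq_abs, abs_of_nonneg (Wfun_nonneg N (z t))] at hg
    have hgb : gronwallBound W₀ K K t ≤ (W₀ + 1) * Real.exp (K * t) := by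
      rw [gronwallBound_of_K_ne_0 (ne_of_gt hKpos), div_self (ne_of_gt hKpos)]
      have he := Real.exp_pos (K * t)
      show W₀ * Real.exp (K * t) + 1 * (Real.exp (K * t) - 1) ≤ (W₀ + 1) * Real.exp (K * t)
      linarith
    have hWt : Wfun N (z t) ≤ (W₀ + 1) * Real.exp (K * t) := le_trans hg hgb
    have hchain2 : normN N (z t) ^ (2 * M) ≤ NM * Wfun N (z t) := normN_pow_le N hN (z t)
    have hchain1 : normN N (z t) ^ (2 * N) ≤ 1 + normN N (z t) ^ (2 * M) := by
      have hnn := normN_nonneg N (z t)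
      have hpa : (0:ℝ) ≤ normN N (z t) ^ (2 * M) := by positivity
      rcases le_total (normN N (z t)) 1 with h | h
      · have := pow_le_one₀ hnn h (n := 2 * N)
        linarith
      · have := pow_le_pow_right₀ h (Nat.mul_le_mul_left 2 (Nat.self_le_factorial N))
        linarith
    have hfinal : NM * Wfun N (z t) ≤ NM * ((W₀ + 1) * Real.exp (K * t)) :=
      mul_le_mul_of_nonneg_left hWt hNM0
    have hWtnn := Wfun_nonneg N (z t)
    show normN N (z t) ^ (2 * N) ≤ 1 + NM * ((W₀ + 1) * Real.exp (K * t))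
    linarith
end

section
/- Let N ≥ 1, let b, c, γ : ℝ^N → [0,∞) be continuous maps with nonnegative values, and let β, Γ ∈ ℝ be constants. Let z : [0,T] → ℝ^N be a differentiable solution of the moment ODE system in which the maps β(·) and Γ(·) are the constants β and Γ, and suppose z_k(0) > 0 for every k ∈ {1,…,N}. Then for every k ∈ {1,…,N} and every t ∈ [0,T]: z_k(t) ≥ z_k(0)·exp( t·( k·β + (k(k-1)/2)·Γ ) ); in particular every component of z remains strictly positive on [0,T]. -/
open MeasureTheory

/-- If `b, c, γ` are continuous and nonnegative, `β, Γ` are constants, and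
all components of the solution of the moment ODE system start strictly positive, then each
component `z_k` stays above `z_k(0)·exp(t(kβ + k(k-1)Γ/2))`; in particular each component
remains strictly positive on `[0,T]`.
(Here `k : Fin N` represents the `(k+1)`-th one-based component.) -/
theorem stmt_10 (N : ℕ) (hN : 0 < N)
    (b c γ : (Fin N → ℝ) → ℝ)
    (hbc : Continuous b) (hcc : Continuous c) (hγc : Continuous γ)
    (hbnn : ∀ x, 0 ≤ b x) (hcnn : ∀ x, 0 ≤ c x) (hγnn : ∀ x, 0 ≤ γ x)
    (β Γ : ℝ)
    (T : ℝ) (z : ℝ → Fin N → ℝ)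
    (hz : IsMomentSol N b (fun _ => β) c γ (fun _ => Γ) (Set.Icc 0 T) z)
    (hz0 : ∀ k : Fin N, 0 < z 0 k) :
    ∀ k : Fin N, ∀ t ∈ Set.Icc (0 : ℝ) T,
      z 0 k * Real.exp (t * (((k : ℕ) + 1 : ℝ) * β
        + (((k : ℕ) + 1 : ℝ) * (k : ℕ) / 2) * Γ)) ≤ z t k ∧ 0 < z t k := by
  have key : ∀ n : ℕ, ∀ k : Fin N, (k : ℕ) = n → ∀ t ∈ Set.Icc (0 : ℝ) T,
      z 0 k * Real.exp (t * (((k : ℕ) + 1 : ℝ) * β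
        + (((k : ℕ) + 1 : ℝ) * (k : ℕ) / 2) * Γ)) ≤ z t k ∧ 0 < z t k := by
    intro n
    induction n using Nat.strong_induction_on with
    | _ n ih =>
      intro k hk t ht
      have hpos : ∀ j : Fin N, (j : ℕ) < n → ∀ s ∈ Set.Icc (0:ℝ) T, 0 < z s j :=
        fun j hj s hs => (ih j hj j rfl s hs).2
      set L : ℝ := ((k : ℕ) + 1 : ℝ) * β + (((k : ℕ) + 1 : ℝ) * (k : ℕ) / 2) * Γ with hL
      have hkN : (k : ℕ) < N := k.isLt
      have hext0 : ∀ s ∈ Set.Icc (0:ℝ) T, 0 ≤ extComp N (z s) ((k : ℕ) : ℤ) := by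
        intro s hs
        unfold extComp
        split_ifs with h1 h2
        · refine le_of_lt (hpos _ ?_ s hs)
          simp only
          omega
        · norm_num
        · exact le_refl 0
      have hext1 : ∀ s ∈ Set.Icc (0:ℝ) T, 0 ≤ extComp N (z s) (((k : ℕ) : ℤ) - 1) := by
        intro s hs
        unfold extComp
        split_ifs with h1 h2
        · refine le_of_lt (hpos _ ?_ s hs)
          simp only
          omega
        · norm_num
        · exact le_refl 0
      have hcoef : (0:ℝ) ≤ ((k : ℕ) + 1 : ℝ) * (k : ℕ) / 2 := by positivity
      have hRHS : ∀ s ∈ Set.Icc (0:ℝ) T,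
          L * z s k ≤ momentRHS N b (fun _ => β) c γ (fun _ => Γ) (z s) k := by
        intro s hs
        unfold momentRHS
        have h1 : (0:ℝ) ≤ (((k : ℕ) + 1 : ℝ) * b (z s)
            + (((k : ℕ) + 1 : ℝ) * (k : ℕ) / 2) * γ (z s)) * extComp N (z s) ((k : ℕ) : ℤ) := by
          apply mul_nonneg
          · have := hbnn (z s); have := hγnn (z s); positivity
          · exact hext0 s hs
        have h2 : (0:ℝ) ≤ (((k : ℕ) + 1 : ℝ) * (k : ℕ) / 2) * c (z s)
            * extComp N (z s) (((k : ℕ) : ℤ) - 1) := by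
          apply mul_nonneg
          · exact mul_nonneg hcoef (hcnn (z s))
          · exact hext1 s hs
        rw [hL]
        nlinarith
      set y : ℝ → ℝ := fun s => z s k * Real.exp (-L * s) with hy
      have hmono : MonotoneOn y (Set.Icc 0 T) := by
        apply monotoneOn_of_hasDerivWithinAt_nonneg (convex_Icc 0 T)
          (f' := fun s => (momentRHS N b (fun _ => β) c γ (fun _ => Γ) (z s) k - L * z s k)
            * Real.exp (-L * s))
        · exact fun s hs => ((hz k s hs).continuousWithinAt).mul
            (Real.continuous_exp.comp (continuous_const.mul continuous_id)).continuousWithinAt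
        · intro s hs
          have hs' : s ∈ Set.Icc (0:ℝ) T := interior_subset hs
          have hde : HasDerivAt (fun u => Real.exp (-L * u)) (Real.exp (-L * s) * (-L * 1)) s :=
            ((hasDerivAt_id s).const_mul (-L)).exp
          have := ((hz k s hs').mono (interior_subset)).mul hde.hasDerivWithinAt
          convert this using 1
          · rfl
          case e'_5 => rfl
          case e'_8 => rfl
          case e'_9 => ring
        · intro s hs
          have hs' : s ∈ Set.Icc (0:ℝ) T := interior_subset hs
          have := hRHS s hs'
          have hexp : (0:ℝ) < Real.exp (-L * s) := Real.exp_pos _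
          nlinarith
      have h0T : (0:ℝ) ∈ Set.Icc (0:ℝ) T := ⟨le_refl _, le_trans ht.1 ht.2⟩
      have hy0 : y 0 ≤ y t := hmono h0T ht ht.1
      have hy0' : y 0 = z 0 k := by simp [hy]
      have hexp : (0:ℝ) < Real.exp (-L * t) := Real.exp_pos _
      have hexp2 : Real.exp (-L * t) * Real.exp (t * L) = 1 := by
        rw [← Real.exp_add]; ring_nf; exact Real.exp_zero
      have hmain : z 0 k * Real.exp (t * L) ≤ z t k := by
        have h1 : z 0 k ≤ z t k * Real.exp (-L * t) := by rw [← hy0']; exact hy0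
        have h2 := mul_le_mul_of_nonneg_right h1 (le_of_lt (Real.exp_pos (t * L)))
        calc z 0 k * Real.exp (t * L) ≤ z t k * Real.exp (-L * t) * Real.exp (t * L) := h2
          _ = z t k * (Real.exp (-L * t) * Real.exp (t * L)) := by ring
          _ = z t k := by rw [hexp2, mul_one]
      refine ⟨hmain, lt_of_lt_of_le ?_ hmain⟩
      exact mul_pos (hz0 k) (Real.exp_pos _)
  exact fun k => key (k : ℕ) k rfl
end

section
/- Let (Ω, F, μ) be a probability space, N ≥ 1, and Z : Ω → ℝ a random variable with E[|Z|^N] < ∞ (so that Z^i is integrable for every i ∈ {1,…,N}). Then ‖( E[Z], E[Z²], …, E[Z^N] )‖_N ≤ √N · ( E[|Z|^N] )^{1/N}. -/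
open MeasureTheory
open scoped ENNReal

/-- For a random variable `Z` with finite `N`-th absolute moment,
`‖(E[Z], …, E[Z^N])‖_N ≤ √N · (E[|Z|^N])^{1/N}`. -/
theorem stmt_13 {Ω : Type*} [MeasurableSpace Ω] (μ : Measure Ω) [IsProbabilityMeasure μ]
    (N : ℕ) (hN : 0 < N) (Z : Ω → ℝ) (hZm : Measurable Z)
    (hZint : Integrable (fun ω => |Z ω| ^ N) μ) :
    normN N (fun i => ∫ ω, (Z ω) ^ ((i : ℕ) + 1) ∂μ)
      ≤ Real.sqrt N * (∫ ω, |Z ω| ^ N ∂μ) ^ ((1 : ℝ) / N) := by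
  set M : ℝ := ∫ ω, |Z ω| ^ N ∂μ with hM
  have hM0 : 0 ≤ M := integral_nonneg fun ω => by positivity
  have hN0' : (N : ℝ) ≠ 0 := by positivity
  have hN0 : (N : ℝ≥0∞) ≠ 0 := by exact_mod_cast hN.ne'
  have hNtop : (N : ℝ≥0∞) ≠ ∞ := ENNReal.natCast_ne_top N
  have hmem : MemLp Z (N : ℝ≥0∞) μ := by
    rw [← memLp_norm_rpow_iff (q := (N : ℝ≥0∞)) hZm.aestronglyMeasurable hN0 hNtop,
      ENNReal.div_self hN0 hNtop, memLp_one_iff_integrable]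
    convert hZint using 2 with ω
    simp [Real.rpow_natCast]
  have key : ∀ i : Fin N, |∫ ω, (Z ω) ^ ((i : ℕ) + 1) ∂μ| ≤ M ^ ((((i : ℕ) + 1 : ℕ) : ℝ) / N) := by
    intro i
    have hq : (((i : ℕ) + 1 : ℕ) : ℝ≥0∞) ≤ (N : ℝ≥0∞) := by
      exact_mod_cast Nat.cast_le.mpr i.2
    have hi0 : (((i : ℕ) + 1 : ℕ) : ℝ≥0∞) ≠ 0 := by positivity
    have hitop : (((i : ℕ) + 1 : ℕ) : ℝ≥0∞) ≠ ∞ := ENNReal.natCast_ne_top _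
    have memi : MemLp Z (((i : ℕ) + 1 : ℕ) : ℝ≥0∞) μ := hmem.mono_exponent hq
    have hle := eLpNorm_le_eLpNorm_of_exponent_le hq hZm.aestronglyMeasurable (μ := μ)
    rw [memi.eLpNorm_eq_integral_rpow_norm hi0 hitop,
      hmem.eLpNorm_eq_integral_rpow_norm hN0 hNtop] at hle
    simp only [ENNReal.toReal_natCast, Real.norm_eq_abs, Real.rpow_natCast] at hle
    rw [ENNReal.ofReal_le_ofReal_iff (by positivity)] at hle
    rw [← hM] at hle
    set A : ℝ := ∫ ω, |Z ω| ^ ((i : ℕ) + 1) ∂μ with hA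
    have hA0 : 0 ≤ A := integral_nonneg fun ω => by positivity
    have hc0 : (0 : ℝ) < (((i : ℕ) + 1 : ℕ) : ℝ) := by positivity
    have habs : |∫ ω, (Z ω) ^ ((i : ℕ) + 1) ∂μ| ≤ A := by
      calc |∫ ω, (Z ω) ^ ((i : ℕ) + 1) ∂μ| ≤ ∫ ω, |(Z ω) ^ ((i : ℕ) + 1)| ∂μ := by
            simpa using norm_integral_le_integral_norm (fun ω => (Z ω) ^ ((i : ℕ) + 1)) (μ := μ)
        _ = A := by simp [abs_pow, hA]
    have hstep := Real.rpow_le_rpow (Real.rpow_nonneg hA0 _) hle hc0.le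
    rw [← Real.rpow_mul hA0, inv_mul_cancel₀ hc0.ne', Real.rpow_one,
      ← Real.rpow_mul hM0, inv_mul_eq_div] at hstep
    exact habs.trans hstep
  have term : ∀ i : Fin N,
      |∫ ω, (Z ω) ^ ((i : ℕ) + 1) ∂μ| ^ ((2 : ℝ) / (((i : ℕ) : ℝ) + 1)) ≤ M ^ ((2 : ℝ) / N) := by
    intro i
    have h2 : (0 : ℝ) ≤ 2 / (((i : ℕ) : ℝ) + 1) := by positivity
    have h := Real.rpow_le_rpow (abs_nonneg _) (key i) h2
    rw [← Real.rpow_mul hM0] at h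
    refine h.trans_eq ?_
    congr 1
    have hi : (((i : ℕ) : ℝ) + 1) ≠ 0 := by positivity
    push_cast
    field_simp
  unfold normN
  have hsum : ∑ i : Fin N, |∫ ω, (Z ω) ^ ((i : ℕ) + 1) ∂μ| ^ ((2 : ℝ) / (((i : ℕ) : ℝ) + 1))
      ≤ (N : ℝ) * M ^ ((2 : ℝ) / N) := by
    calc ∑ i : Fin N, |∫ ω, (Z ω) ^ ((i : ℕ) + 1) ∂μ| ^ ((2 : ℝ) / (((i : ℕ) : ℝ) + 1))
        ≤ ∑ _i : Fin N, M ^ ((2 : ℝ) / N) := Finset.sum_le_sum fun i _ => term i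
      _ = (N : ℝ) * M ^ ((2 : ℝ) / N) := by
        simp [Finset.sum_const, nsmul_eq_mul]
  refine (Real.sqrt_le_sqrt hsum).trans ?_
  rw [Real.sqrt_mul (Nat.cast_nonneg N)]
  have h2 : M ^ ((2 : ℝ) / N) = (M ^ ((1 : ℝ) / N)) ^ 2 := by
    rw [← Real.rpow_natCast (M ^ ((1 : ℝ) / N)) 2, ← Real.rpow_mul hM0]
    norm_num
    ring_nf
  rw [h2, Real.sqrt_sq (by positivity)]
end
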